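/- arXiv:1711.07778 — 6 statements merged into one kernel-verified Lean document; each statement's English description precedes it below -/
import Mathlib

section
/- Let Θ : ℝ^d → ℂ be a function with Θ(0) = 0. Then Θ is negative definite (in the sense of Schoenberg) if and only if for every t > 0 the function x ↦ exp(−tΘ(x)) is positive definite. -/
open scoped ComplexOrder
/-- A function `f : ℝ^d → ℂ` is positive definite if for every `m ∈ ℕ` and all
`x₁, …, x_m ∈ ℝ^d` the matrix `(f (x i - x j))_{i,j}` is positive semidefinite Hermitian. -/
def IsPosDefFn {d : ℕ} (f : EuclideanSpace ℝ (Fin d) → ℂ) : Prop :=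
  ∀ (m : ℕ) (x : Fin m → EuclideanSpace ℝ (Fin d)),
    (Matrix.of fun i j => f (x i - x j)).PosSemidef

/-- A function `Θ : ℝ^d → ℂ` is negative definite (in the sense of Schoenberg) if for every
`m ∈ ℕ` and all `x₁, …, x_m ∈ ℝ^d` the matrix
`(Θ (x i) + conj (Θ (x j)) - Θ (x i - x j))_{i,j}` is positive semidefinite Hermitian. -/
def IsNegDefFn {d : ℕ} (Θ : EuclideanSpace ℝ (Fin d) → ℂ) : Prop :=
  ∀ (m : ℕ) (x : Fin m → EuclideanSpace ℝ (Fin d)),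
    (Matrix.of fun i j =>
      Θ (x i) + (starRingEnd ℂ) (Θ (x j)) - Θ (x i - x j)).PosSemidef


open Matrix Complex Finset ComplexConjugate

variable {n : Type*} [Fintype n] [DecidableEq n]

lemma quad_eq (M : Matrix n n ℂ) (x : n → ℂ) :
    star x ⬝ᵥ M *ᵥ x = ∑ i, ∑ j, conj (x i) * M i j * x j := by
  simp [dotProduct, mulVec, Finset.mul_sum, mul_assoc]

lemma posSemidef_of (M : Matrix n n ℂ) (h1 : ∀ i j, conj (M j i) = M i j)
    (h2 : ∀ x : n → ℂ, 0 ≤ ∑ i, ∑ j, conj (x i) * M i j * x j) : M.PosSemidef := by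
  refine Matrix.PosSemidef.of_dotProduct_mulVec_nonneg (IsHermitian.ext fun i j => ?_) fun x => ?_
  · simpa [conjTranspose_apply] using h1 i j
  · rw [quad_eq]; exact h2 x

lemma psd_quad_nonneg {M : Matrix n n ℂ} (hM : M.PosSemidef) (x : n → ℂ) :
    0 ≤ ∑ i, ∑ j, conj (x i) * M i j * x j := by
  rw [← quad_eq]; exact hM.dotProduct_mulVec_nonneg x

lemma psd_conj_apply {M : Matrix n n ℂ} (hM : M.PosSemidef) (i j : n) :
    conj (M j i) = M i j := by
  conv_rhs => rw [← hM.1.eq]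
  simp [conjTranspose_apply]

set_option linter.unusedSectionVars false

lemma schur {A B : Matrix n n ℂ} (hA : A.PosSemidef) (hB : B.PosSemidef) :
    (Matrix.of fun i j => A i j * B i j).PosSemidef := by
  obtain ⟨C, hC⟩ : ∃ C : Matrix n n ℂ, B = Cᴴ * C := by
    open scoped MatrixOrder in
    obtain ⟨C, hC⟩ := CStarAlgebra.nonneg_iff_eq_star_mul_self.mp hB.nonneg
    exact ⟨C, hC⟩
  have hBij : ∀ i j, B i j = ∑ k, conj (C k i) * C k j := by
    intro i j; rw [hC]; simp [Matrix.mul_apply, conjTranspose_apply]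
  refine posSemidef_of _ (fun i j => ?_) (fun x => ?_)
  · simp only [Matrix.of_apply, _root_.map_mul, psd_conj_apply hA, psd_conj_apply hB]
  · have key : ∀ i j, conj (x i) * (Matrix.of fun i j => A i j * B i j) i j * x j
        = ∑ k, conj (x i * C k i) * A i j * (x j * C k j) := by
      intro i j
      simp only [Matrix.of_apply, hBij, Finset.mul_sum, Finset.sum_mul]
      refine Finset.sum_congr rfl fun k _ => ?_
      simp only [_root_.map_mul]; ring
    simp only [key]
    have swap : ∑ i, ∑ j, ∑ k, conj (x i * C k i) * A i j * (x j * C k j)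
        = ∑ k, ∑ i, ∑ j, conj (x i * C k i) * A i j * (x j * C k j) := by
      calc ∑ i, ∑ j, ∑ k, conj (x i * C k i) * A i j * (x j * C k j)
          = ∑ i, ∑ k, ∑ j, conj (x i * C k i) * A i j * (x j * C k j) :=
            Finset.sum_congr rfl fun i _ => Finset.sum_comm
        _ = ∑ k, ∑ i, ∑ j, conj (x i * C k i) * A i j * (x j * C k j) := Finset.sum_comm
    rw [swap]
    exact Finset.sum_nonneg fun k _ => psd_quad_nonneg hA (fun i => x i * C k i)

lemma hadamard_pow {A : Matrix n n ℂ} (hA : A.PosSemidef) (k : ℕ) :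
    (Matrix.of fun i j => A i j ^ k).PosSemidef := by
  induction k with
  | zero =>
    refine posSemidef_of _ (fun i j => by simp) (fun x => ?_)
    have h2 : ∑ i, ∑ j, conj (x i) * (Matrix.of fun i j => A i j ^ 0) i j * x j
        = conj (∑ i, x i) * (∑ j, x j) := by
      rw [map_sum, Finset.sum_mul_sum]
      simp
    rw [h2]
    simpa using star_mul_self_nonneg (∑ i, x i)
  | succ k ih =>
    have heq : (Matrix.of fun i j => A i j ^ (k + 1))
        = Matrix.of fun i j => (Matrix.of fun i j => A i j ^ k) i j * A i j := by
      ext i j; simp [pow_succ]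
    rw [heq]
    exact schur ih hA

lemma hadamard_exp {A : Matrix n n ℂ} (hA : A.PosSemidef) :
    (Matrix.of fun i j => Complex.exp (A i j)).PosSemidef := by
  have hexp : ∀ z : ℂ, Complex.exp z = ∑' k : ℕ, z ^ k / (Nat.factorial k) := by
    intro z
    rw [Complex.exp_eq_exp_ℂ, NormedSpace.exp_eq_tsum_div]
  refine posSemidef_of _ (fun i j => ?_) (fun x => ?_)
  · simp only [Matrix.of_apply, ← Complex.exp_conj, psd_conj_apply hA]
  · have hsumm : ∀ i j : n, Summable (fun k : ℕ => conj (x i) * (A i j ^ k / (Nat.factorial k)) * x j) := by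
      intro i j
      exact ((NormedSpace.expSeries_div_summable (A i j)).mul_left _).mul_right _
    have key : ∀ i j, conj (x i) * (Matrix.of fun i j => Complex.exp (A i j)) i j * x j
        = ∑' k : ℕ, conj (x i) * (A i j ^ k / (Nat.factorial k)) * x j := by
      intro i j
      simp only [Matrix.of_apply, hexp]
      rw [← tsum_mul_left, ← tsum_mul_right]
    simp only [key]
    have swap : ∑ i, ∑ j, ∑' k : ℕ, conj (x i) * (A i j ^ k / (Nat.factorial k)) * x j
        = ∑' k : ℕ, ∑ i, ∑ j, conj (x i) * (A i j ^ k / (Nat.factorial k)) * x j := by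
      have h1 : ∀ i, (∑ j, ∑' k : ℕ, conj (x i) * (A i j ^ k / (Nat.factorial k)) * x j)
          = ∑' k : ℕ, ∑ j, conj (x i) * (A i j ^ k / (Nat.factorial k)) * x j :=
        fun i => (Summable.tsum_finsetSum (fun j _ => hsumm i j)).symm
      simp only [h1]
      exact (Summable.tsum_finsetSum (fun i _ => summable_sum (fun j _ => hsumm i j))).symm
    rw [swap]
    refine tsum_nonneg fun k => ?_
    have hk : ∑ i, ∑ j, conj (x i) * (A i j ^ k / (Nat.factorial k)) * x j
        = (((Nat.factorial k : ℝ))⁻¹ : ℂ) * ∑ i, ∑ j, conj (x i) * (Matrix.of fun i j => A i j ^ k) i j * x j := by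
      rw [Finset.mul_sum]
      refine Finset.sum_congr rfl fun i _ => ?_
      rw [Finset.mul_sum]
      refine Finset.sum_congr rfl fun j _ => ?_
      simp only [Matrix.of_apply]
      push_cast
      have hkne : ((Nat.factorial k : ℂ)) ≠ 0 := by exact_mod_cast Nat.factorial_ne_zero k
      field_simp
    rw [hk]
    refine mul_nonneg ?_ (psd_quad_nonneg (hadamard_pow hA k) x)
    rw [← Complex.ofReal_inv, Complex.zero_le_real]
    positivity

lemma psd_real_smul {M : Matrix n n ℂ} (hM : M.PosSemidef) {r : ℝ} (hr : 0 ≤ r) :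
    ((r : ℂ) • M).PosSemidef := by
  refine posSemidef_of _ (fun i j => ?_) (fun x => ?_)
  · simp [psd_conj_apply hM, Complex.conj_ofReal]
  · have h : ∀ i j, conj (x i) * ((r : ℂ) • M) i j * x j
        = (r : ℂ) * (conj (x i) * M i j * x j) := by
      intro i j; simp [Matrix.smul_apply, smul_eq_mul]; ring
    simp only [h, ← Finset.mul_sum]
    exact mul_nonneg (by rwa [Complex.zero_le_real]) (psd_quad_nonneg hM x)

open Filter Topology in
lemma psd_of_tendsto {M : ℕ → Matrix n n ℂ} {A : Matrix n n ℂ}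
    (hM : ∀ k, (M k).PosSemidef)
    (h : ∀ i j, Tendsto (fun k => M k i j) atTop (𝓝 (A i j))) : A.PosSemidef := by
  refine posSemidef_of _ (fun i j => ?_) (fun x => ?_)
  · have h1 : Tendsto (fun k => conj (M k j i)) atTop (𝓝 (conj (A j i))) :=
      (Complex.continuous_conj.tendsto _).comp (h j i)
    have h2 : (fun k => conj (M k j i)) = fun k => M k i j :=
      funext fun k => psd_conj_apply (hM k) i j
    rw [h2] at h1
    exact tendsto_nhds_unique h1 (h i j)
  · have hq : Tendsto (fun k => ∑ i, ∑ j, conj (x i) * M k i j * x j) atTop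
        (𝓝 (∑ i, ∑ j, conj (x i) * A i j * x j)) := by
      refine tendsto_finset_sum _ fun i _ => tendsto_finset_sum _ fun j _ => ?_
      exact (((h i j).const_mul _).mul_const _)
    exact ge_of_tendsto' hq fun k => psd_quad_nonneg (hM k) x

lemma posdef_conj_neg {d : ℕ} {f : EuclideanSpace ℝ (Fin d) → ℂ} (hf : IsPosDefFn f)
    (v : EuclideanSpace ℝ (Fin d)) : conj (f v) = f (-v) := by
  have h := psd_conj_apply (hf 2 ![v, 0]) 1 0
  simpa using h

lemma shifted_psd {d m : ℕ} {f : EuclideanSpace ℝ (Fin d) → ℂ} (hf : IsPosDefFn f)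
    (x : Fin m → EuclideanSpace ℝ (Fin d)) :
    (Matrix.of fun i j => f (x i - x j) - f (x i) - conj (f (x j)) + f 0).PosSemidef := by
  set y : Fin (m + 1) → EuclideanSpace ℝ (Fin d) := Fin.cons 0 x with hy
  have hP := hf (m + 1) y
  set P : Matrix (Fin (m + 1)) (Fin (m + 1)) ℂ := Matrix.of fun k l => f (y k - y l) with hPdef
  set E : Matrix (Fin (m + 1)) (Fin m) ℂ :=
    Matrix.of fun k j => if j.succ = k then 1 else if k = 0 then -1 else 0 with hE
  have key : (Matrix.of fun i j => f (x i - x j) - f (x i) - conj (f (x j)) + f 0)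
      = Eᴴ * P * E := by
    ext i j
    have hcol : ∀ (k : Fin (m + 1)), (P * E) k j = P k j.succ - P k 0 := by
      intro k
      simp only [Matrix.mul_apply, hE, Matrix.of_apply]
      rw [Fin.sum_univ_succ]
      simp only [Fin.succ_ne_zero, if_false, if_true, ite_true, ite_false, eq_self_iff_true,
        Fin.succ_inj, mul_ite, mul_one, mul_neg_one, mul_zero, ite_self]
      rw [Finset.sum_ite_eq Finset.univ j (fun l => P k l.succ)]
      simp only [Finset.mem_univ, if_true]
      ring
    rw [Matrix.mul_assoc, Matrix.mul_apply]
    simp only [conjTranspose_apply, hcol]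
    rw [Fin.sum_univ_succ]
    simp only [hE, Matrix.of_apply, Fin.succ_ne_zero, Fin.succ_inj, if_false, if_true,
      ite_true, ite_false, eq_self_iff_true, apply_ite (star : ℂ → ℂ), star_one, star_neg,
      star_zero, ite_mul, one_mul, neg_one_mul, zero_mul, ite_self]
    rw [Finset.sum_ite_eq Finset.univ i (fun k => P k.succ j.succ - P k.succ 0)]
    have hsym : conj (f (x j)) = f (0 - x j) := by
      rw [posdef_conj_neg hf, zero_sub]
    simp only [Finset.mem_univ, if_true, hPdef, Matrix.of_apply, hy, Fin.cons_zero, Fin.cons_succ]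
    rw [hsym]
    simp only [sub_self, sub_zero]
    ring
  rw [key]
  exact Matrix.PosSemidef.conjTranspose_mul_mul_same hP E

open Filter Topology

/-- For `Θ : ℝ^d → ℂ` with `Θ 0 = 0`, `Θ` is negative definite (in the sense of Schoenberg)
if and only if for every `t > 0` the function `x ↦ exp (-t Θ x)` is positive definite. -/
theorem negDef_iff_exp_posDef {d : ℕ} (Θ : EuclideanSpace ℝ (Fin d) → ℂ)
    (hΘ0 : Θ 0 = 0) :
    IsNegDefFn Θ ↔
      ∀ t : ℝ, 0 < t → IsPosDefFn (fun x => Complex.exp (-(t : ℂ) * Θ x)) := by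
  constructor
  · intro hN t ht m x
    have hNx := hN m x
    have htN := psd_real_smul hNx ht.le
    have hExp := hadamard_exp htN
    set N : Matrix (Fin m) (Fin m) ℂ := Matrix.of fun i j =>
      Θ (x i) + conj (Θ (x j)) - Θ (x i - x j) with hNdef
    set D : Matrix (Fin m) (Fin m) ℂ :=
      Matrix.diagonal (fun i => Complex.exp (-(t : ℂ) * Θ (x i))) with hD
    have key : (Matrix.of fun i j =>
        (fun v => Complex.exp (-(t : ℂ) * Θ v)) (x i - x j))
        = D * (Matrix.of fun i j => Complex.exp (((t : ℂ) • N) i j)) * Dᴴ := by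
      ext i j
      rw [Matrix.diagonal_conjTranspose, Matrix.mul_diagonal, Matrix.diagonal_mul]
      simp only [Matrix.of_apply, Pi.star_apply, RCLike.star_def, Matrix.smul_apply,
        smul_eq_mul, hNdef]
      rw [← Complex.exp_conj, ← Complex.exp_add, ← Complex.exp_add]
      congr 1
      simp only [_root_.map_mul, map_neg, _root_.map_add, map_sub, Complex.conj_ofReal, Complex.conj_conj]
      ring
    have := key ▸ (hExp.mul_mul_conjTranspose_same D)
    exact this
  · intro h m x
    set A : Matrix (Fin m) (Fin m) ℂ := Matrix.of fun i j =>
      Θ (x i) + conj (Θ (x j)) - Θ (x i - x j) with hA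
    set tt : ℕ → ℝ := fun nn => ((nn : ℝ) + 1)⁻¹ with htt
    have httpos : ∀ nn : ℕ, 0 < tt nn := by intro nn; positivity
    set M : ℕ → Matrix (Fin m) (Fin m) ℂ := fun nn =>
      (((((nn : ℝ) + 1) : ℝ) : ℂ)) •
        (Matrix.of fun i j =>
          Complex.exp (-(tt nn : ℂ) * Θ (x i - x j))
            - Complex.exp (-(tt nn : ℂ) * Θ (x i))
            - conj (Complex.exp (-(tt nn : ℂ) * Θ (x j)))
            + Complex.exp (-(tt nn : ℂ) * Θ 0)) with hM
    have hMpsd : ∀ nn, (M nn).PosSemidef := by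
      intro nn
      exact psd_real_smul (shifted_psd (h (tt nn) (httpos nn)) x) (by positivity)
    refine psd_of_tendsto hMpsd ?_
    intro i j
    set B := Θ (x i) with hB
    set C := Θ (x j) with hC
    set Av := Θ (x i - x j) with hAv
    set g : ℝ → ℂ := fun t => Complex.exp (-(t : ℂ) * Av) - Complex.exp (-(t : ℂ) * B)
      - Complex.exp (-(t : ℂ) * conj C) + 1 with hg
    have hg0 : g 0 = 0 := by simp [hg]
    have hderiv : HasDerivAt g (B + conj C - Av) 0 := by
      have base : ∀ z : ℂ, HasDerivAt (fun t : ℝ => Complex.exp (-(t : ℂ) * z)) (-z) 0 := by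
        intro z
        have h1 : HasDerivAt (fun t : ℝ => -(t : ℂ) * z) (-z) 0 := by
          have := ((Complex.ofRealCLM.hasDerivAt (x := (0:ℝ))).mul_const z).neg
          simpa [neg_mul, Pi.neg_def] using this
        simpa using h1.cexp
      have hsum := (((base Av).sub (base B)).sub (base (conj C))).add_const 1
      convert hsum using 1
      · rfl
      · rfl
      ring
    rw [hasDerivAt_iff_tendsto_slope] at hderiv
    have ht0 : Tendsto tt atTop (𝓝[≠] (0 : ℝ)) := by
      apply tendsto_nhdsWithin_of_tendsto_nhds_of_eventually_within
      · have := tendsto_one_div_add_atTop_nhds_zero_nat (𝕜 := ℝ)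
        simpa [htt, one_div] using this
      · filter_upwards with nn
        exact (httpos nn).ne'
    have hcomp := hderiv.comp ht0
    have hentry : ∀ t : ℝ, Complex.exp (-(t : ℂ) * Av) - Complex.exp (-(t : ℂ) * B)
        - conj (Complex.exp (-(t : ℂ) * C)) + Complex.exp (-(t : ℂ) * Θ 0) = g t := by
      intro t
      simp only [hg, hΘ0, mul_zero, Complex.exp_zero, ← Complex.exp_conj, _root_.map_mul,
        map_neg, Complex.conj_ofReal]
    refine hcomp.congr fun nn => ?_
    show slope g 0 (tt nn) = M nn i j
    rw [slope_def_module, sub_zero, hg0, sub_zero]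
    simp only [hM, Matrix.smul_apply, Matrix.of_apply, smul_eq_mul, hentry,
      ← hB, ← hC, ← hAv]
    rw [Complex.real_smul]
    congr 1
    · push_cast
      rw [htt]
      push_cast
      rw [inv_inv]
end

section
/- Let Θ : ℝ^d → ℂ be a function with Θ(0) = 0. Then Θ is negative definite (in the sense of Schoenberg) if and only if for every t > 0 the function x ↦ t^{−1}(1 − exp(−tΘ(x))) is negative definite. -/
open scoped ComplexOrder
open Filter Matrix

section Helpers

/-- Scaling a PSD complex matrix by a nonnegative real. -/
lemma psd_smul_real {n : Type*} [Fintype n] {M : Matrix n n ℂ} (hM : M.PosSemidef)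
    {c : ℝ} (hc : 0 ≤ c) : ((c : ℂ) • M).PosSemidef := by
  refine Matrix.PosSemidef.of_dotProduct_mulVec_nonneg ?_ ?_
  · unfold Matrix.IsHermitian
    rw [Matrix.conjTranspose_smul, hM.1]
    congr 1
    simp [Complex.conj_ofReal]
  · intro x
    rw [Matrix.smul_mulVec, dotProduct_smul]
    have h0 : (0 : ℂ) ≤ (c : ℂ) := by exact_mod_cast Complex.zero_le_real.mpr hc
    exact mul_nonneg h0 (hM.dotProduct_mulVec_nonneg x)

/-- Entrywise limits of PSD matrices are PSD. -/
lemma psd_of_tendsto_s1 {n : Type*} [Fintype n] (f : ℕ → Matrix n n ℂ) (M : Matrix n n ℂ)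
    (hf : ∀ k, (f k).PosSemidef)
    (hlim : ∀ i j, Tendsto (fun k => f k i j) atTop (nhds (M i j))) : M.PosSemidef := by
  refine Matrix.PosSemidef.of_dotProduct_mulVec_nonneg ?_ ?_
  · ext i j
    have h1 : Tendsto (fun k => (f k)ᴴ i j) atTop (nhds (Mᴴ i j)) := by
      simpa [Matrix.conjTranspose_apply, Function.comp_def] using
        ((Complex.continuous_conj.tendsto _).comp (hlim j i))
    have h2 : Tendsto (fun k => (f k)ᴴ i j) atTop (nhds (M i j)) := by
      refine Tendsto.congr (fun k => ?_) (hlim i j)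
      rw [(hf k).1]
    exact tendsto_nhds_unique h1 h2
  · intro x
    have hq : Tendsto (fun k => dotProduct (star x) (f k *ᵥ x)) atTop
        (nhds (dotProduct (star x) (M *ᵥ x))) := by
      simp only [dotProduct, Matrix.mulVec, dotProduct]
      refine tendsto_finset_sum _ fun i _ => Tendsto.const_mul _ ?_
      exact tendsto_finset_sum _ fun j _ => Tendsto.mul_const _ (hlim i j)
    exact ge_of_tendsto hq (Filter.Eventually.of_forall fun k => (hf k).dotProduct_mulVec_nonneg x)

/-- The all-ones matrix is PSD. -/
lemma psd_allOnes {n : Type*} [Fintype n] :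
    (Matrix.of fun (_ _ : n) => (1 : ℂ)).PosSemidef := by
  refine Matrix.PosSemidef.of_dotProduct_mulVec_nonneg ?_ ?_
  · ext i j; simp [Matrix.conjTranspose_apply]
  · intro x
    have : dotProduct (star x) ((Matrix.of fun (_ _ : n) => (1 : ℂ)) *ᵥ x)
        = star (∑ j, x j) * (∑ j, x j) := by
      simp [dotProduct, Matrix.mulVec, Finset.sum_mul, star_sum]
    rw [this]
    exact star_mul_self_nonneg _

/-- Schur product theorem. -/
lemma psd_hadamard {n : Type*} [Fintype n] [DecidableEq n] {A B : Matrix n n ℂ}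
    (hA : A.PosSemidef) (hB : B.PosSemidef) :
    (Matrix.of fun i j => A i j * B i j).PosSemidef := by
  open scoped MatrixOrder in
  obtain ⟨C, rfl⟩ : ∃ C : Matrix n n ℂ, A = Cᴴ * C :=
    CStarAlgebra.nonneg_iff_eq_star_mul_self.mp hA.nonneg
  open scoped MatrixOrder in
  obtain ⟨D, rfl⟩ : ∃ D : Matrix n n ℂ, B = Dᴴ * D :=
    CStarAlgebra.nonneg_iff_eq_star_mul_self.mp hB.nonneg
  let E : Matrix (n × n) n ℂ := Matrix.of fun p j => C p.1 j * D p.2 j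
  have hE : (Matrix.of fun i j => (Cᴴ * C) i j * (Dᴴ * D) i j) = Eᴴ * E := by
    ext i j
    simp only [Matrix.of_apply, Matrix.mul_apply, Matrix.conjTranspose_apply, E]
    rw [Fintype.sum_prod_type, Finset.sum_mul_sum]
    refine Finset.sum_congr rfl fun k _ => Finset.sum_congr rfl fun l _ => ?_
    simp only [star_mul']
    ring
  rw [hE]
  exact Matrix.posSemidef_conjTranspose_mul_self E

/-- Entrywise powers of a PSD matrix are PSD. -/
lemma psd_entry_pow {n : Type*} [Fintype n] [DecidableEq n] {M : Matrix n n ℂ}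
    (hM : M.PosSemidef) (k : ℕ) : (Matrix.of fun i j => M i j ^ k).PosSemidef := by
  induction k with
  | zero => simpa using psd_allOnes (n := n)
  | succ k ih =>
    have := psd_hadamard hM ih
    convert this using 2
    ext i j
    simp [pow_succ, mul_comm]

/-- Entrywise exponential of a PSD matrix is PSD. -/
lemma psd_entry_exp {n : Type*} [Fintype n] [DecidableEq n] {M : Matrix n n ℂ}
    (hM : M.PosSemidef) : (Matrix.of fun i j => Complex.exp (M i j)).PosSemidef := by
  apply psd_of_tendsto_s1
    (fun k => ∑ l ∈ Finset.range k,
      (Complex.ofReal (l.factorial : ℝ)⁻¹) • Matrix.of fun i j => M i j ^ l)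
  · intro k
    induction k with
    | zero => simp; exact Matrix.PosSemidef.zero
    | succ k ih =>
      rw [Finset.sum_range_succ]
      exact ih.add (psd_smul_real (psd_entry_pow hM k) (by positivity))
  · intro i j
    have h := (NormedSpace.expSeries_div_hasSum_exp (M i j)).tendsto_sum_nat
    rw [← Complex.exp_eq_exp_ℂ] at h
    refine h.congr fun k => ?_
    rw [Matrix.sum_apply]
    refine Finset.sum_congr rfl fun l _ => ?_
    simp [Matrix.smul_apply, div_eq_inv_mul, Complex.ofReal_natCast, smul_eq_mul]

lemma tendsto_inv_one_sub_exp (z : ℂ) :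
    Tendsto (fun k : ℕ => (((1 / (k + 1) : ℝ)) : ℂ)⁻¹ *
      (1 - Complex.exp (-((1 / (k + 1) : ℝ) : ℂ) * z))) atTop (nhds z) := by
  have hg : HasDerivAt (fun s : ℂ => Complex.exp (-s * z)) (-z) 0 := by
    have h1 : HasDerivAt (fun s : ℂ => -s * z) (-z) 0 := by
      simpa using ((hasDerivAt_id (0 : ℂ)).neg.mul_const z)
    have h2 : HasDerivAt Complex.exp 1 (-(0 : ℂ) * z) := by
      simpa using Complex.hasDerivAt_exp (-(0 : ℂ) * z)
    simpa [Function.comp_def] using h2.comp 0 h1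
  have hslope := hasDerivAt_iff_tendsto_slope.mp hg
  have hu : Tendsto (fun k : ℕ => ((1 / (k + 1) : ℝ) : ℂ)) atTop (nhdsWithin 0 {(0 : ℂ)}ᶜ) := by
    rw [tendsto_nhdsWithin_iff]
    refine ⟨?_, Filter.Eventually.of_forall fun k => ?_⟩
    · have h2 := (Complex.continuous_ofReal.tendsto (0 : ℝ)).comp
        tendsto_one_div_add_atTop_nhds_zero_nat
      refine Tendsto.congr (fun k => ?_) (by simpa using h2)
      simp
    · simp only [Set.mem_compl_iff, Set.mem_singleton_iff, Complex.ofReal_eq_zero]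
      positivity
  have hcomp := (hslope.comp hu).neg
  rw [neg_neg] at hcomp
  refine Tendsto.congr (fun k => ?_) hcomp
  have hk0 : ((1 / (k + 1) : ℝ) : ℂ) ≠ 0 := by
    simp only [ne_eq, Complex.ofReal_eq_zero]
    positivity
  simp only [Function.comp_apply, slope_def_field]
  rw [sub_zero]
  field_simp
  simp only [mul_zero, neg_zero, Complex.exp_zero]
  ring

end Helpers

/-- For `Θ : ℝ^d → ℂ` with `Θ 0 = 0`, `Θ` is negative definite (in the sense of Schoenberg)
if and only if for every `t > 0` the function `x ↦ t⁻¹ (1 - exp (-t Θ x))` is negative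
definite. -/
theorem negDef_iff_one_sub_exp_negDef {d : ℕ} (Θ : EuclideanSpace ℝ (Fin d) → ℂ)
    (hΘ0 : Θ 0 = 0) :
    IsNegDefFn Θ ↔
      ∀ t : ℝ, 0 < t →
        IsNegDefFn (fun x => (t : ℂ)⁻¹ * (1 - Complex.exp (-(t : ℂ) * Θ x))) := by
  constructor
  · -- Forward direction
    intro hΘ t ht m x
    -- Step 1: the entrywise exponential matrices are PSD for every tuple of points
    have hExp : ∀ (m' : ℕ) (y : Fin m' → EuclideanSpace ℝ (Fin d)),
        (Matrix.of fun a b => Complex.exp (-(t : ℂ) * Θ (y a - y b))).PosSemidef := by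
      intro m' y
      have hN := hΘ m' y
      have hS := psd_smul_real hN (le_of_lt ht)
      have hK := psd_entry_exp hS
      set D : Matrix (Fin m') (Fin m') ℂ :=
        Matrix.diagonal fun a => Complex.exp (-(t : ℂ) * Θ (y a)) with hD
      have heq : (Matrix.of fun a b => Complex.exp (-(t : ℂ) * Θ (y a - y b)))
          = D * (Matrix.of fun a b => Complex.exp
              (((t : ℂ) • Matrix.of fun a b =>
                Θ (y a) + (starRingEnd ℂ) (Θ (y b)) - Θ (y a - y b)) a b)) * Dᴴ := by
        rw [hD, Matrix.diagonal_conjTranspose]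
        ext a b
        rw [Matrix.mul_diagonal]
        simp only [Matrix.diagonal_mul, Matrix.of_apply, Matrix.smul_apply, smul_eq_mul,
          Pi.star_apply, RCLike.star_def]
        rw [← Complex.exp_conj, ← Complex.exp_add, ← Complex.exp_add]
        congr 1
        simp only [_root_.map_mul, map_neg, Complex.conj_ofReal]
        ring
      rw [heq]
      exact hK.mul_mul_conjTranspose_same D
    -- Step 2: congruence with the inclusion of the origin
    set y : Fin (m + 1) → EuclideanSpace ℝ (Fin d) := Fin.cons 0 x with hy
    have hΦ := hExp (m + 1) y
    set Φ : Matrix (Fin (m + 1)) (Fin (m + 1)) ℂ :=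
      Matrix.of fun a b => Complex.exp (-(t : ℂ) * Θ (y a - y b)) with hΦdef
    set C : Matrix (Fin m) (Fin (m + 1)) ℂ :=
      Matrix.of fun i a => if a = 0 then (-1 : ℂ) else if a = i.succ then 1 else 0 with hC
    have key : (Matrix.of fun i j =>
        (fun x => (t : ℂ)⁻¹ * (1 - Complex.exp (-(t : ℂ) * Θ x))) (x i)
        + (starRingEnd ℂ) ((fun x => (t : ℂ)⁻¹ * (1 - Complex.exp (-(t : ℂ) * Θ x))) (x j))
        - (fun x => (t : ℂ)⁻¹ * (1 - Complex.exp (-(t : ℂ) * Θ x))) (x i - x j))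
        = ((t⁻¹ : ℝ) : ℂ) • (C * Φ * Cᴴ) := by
      ext i j
      have hCΦ : ∀ b, (C * Φ) i b = Φ i.succ b - Φ 0 b := by
        intro b
        rw [Matrix.mul_apply, Fin.sum_univ_succ]
        simp only [hC, Matrix.of_apply, if_pos rfl, Fin.succ_ne_zero, if_false,
          Fin.succ_inj]
        rw [Finset.sum_congr rfl (fun a _ => by rw [ite_mul, one_mul, zero_mul]),
          Finset.sum_ite_eq' Finset.univ i (fun a => Φ a.succ b)]
        simp [sub_eq_neg_add]
      have hentry : (C * Φ * Cᴴ) i j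
          = (Φ i.succ j.succ - Φ 0 j.succ) - (Φ i.succ 0 - Φ 0 0) := by
        rw [Matrix.mul_apply, Fin.sum_univ_succ]
        simp only [Matrix.conjTranspose_apply, hC, Matrix.of_apply, if_pos rfl,
          Fin.succ_ne_zero, if_false, Fin.succ_inj]
        rw [Finset.sum_congr rfl (fun b _ => ?_),
          Finset.sum_ite_eq' Finset.univ j (fun b => (C * Φ) i b.succ)]
        · rw [hCΦ, hCΦ]
          simp only [if_true, Finset.mem_univ, ite_true, star_neg, star_one]
          ring
        · by_cases hb : b = j
          · subst hb; simp [hC]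
          · simp [hb]
      have hΦ00 : Φ 0 0 = 1 := by
        simp [hΦdef, hy, Fin.cons_zero, sub_self, hΘ0]
      have hΦi0 : ∀ i : Fin m, Φ i.succ 0 = Complex.exp (-(t : ℂ) * Θ (x i)) := by
        intro i
        simp [hΦdef, hy, Fin.cons_zero, Fin.cons_succ, sub_zero]
      have hΦ0j : ∀ j : Fin m, Φ 0 j.succ
          = (starRingEnd ℂ) (Complex.exp (-(t : ℂ) * Θ (x j))) := by
        intro j
        have h1 : star (Φ 0 j.succ) = Φ j.succ 0 := hΦ.1.apply j.succ 0
        rw [← star_star (Φ 0 j.succ), h1, hΦi0 j]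
        rfl
      have hΦij : Φ i.succ j.succ = Complex.exp (-(t : ℂ) * Θ (x i - x j)) := by
        simp [hΦdef, hy, Fin.cons_succ]
      rw [Matrix.of_apply, Matrix.smul_apply, hentry, hΦ00, hΦi0, hΦ0j, hΦij]
      simp only [_root_.map_mul, map_sub, _root_.map_one, map_inv₀, Complex.conj_ofReal,
        smul_eq_mul, Complex.ofReal_inv]
      ring
    rw [key]
    exact psd_smul_real (hΦ.mul_mul_conjTranspose_same C) (by positivity)
  · -- Backward direction
    intro h m x
    refine psd_of_tendsto_s1 (fun k => Matrix.of fun i j =>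
        (fun x => (((1 / (k + 1) : ℝ)) : ℂ)⁻¹
          * (1 - Complex.exp (-((1 / (k + 1) : ℝ) : ℂ) * Θ x))) (x i)
        + (starRingEnd ℂ) ((fun x => (((1 / (k + 1) : ℝ)) : ℂ)⁻¹
          * (1 - Complex.exp (-((1 / (k + 1) : ℝ) : ℂ) * Θ x))) (x j))
        - (fun x => (((1 / (k + 1) : ℝ)) : ℂ)⁻¹
          * (1 - Complex.exp (-((1 / (k + 1) : ℝ) : ℂ) * Θ x))) (x i - x j)) _
      (fun k => h (1 / (k + 1) : ℝ) (by positivity) m x) ?_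
    intro i j
    simp only [Matrix.of_apply]
    exact ((tendsto_inv_one_sub_exp (Θ (x i))).add
      ((Complex.continuous_conj.tendsto _).comp (tendsto_inv_one_sub_exp (Θ (x j))))).sub
      (tendsto_inv_one_sub_exp (Θ (x i - x j)))
end

section
/- Let ρ be a symmetric Lévy measure on ℝ^d∖{0} with full support and Θ(u) = ∫(1 − cos⟨u,r⟩) ρ(dr) the associated real-valued continuous negative definite function. If U, V are d-dimensional random variables and (U′,V′) is an independent copy of (U,V) (so that U,U′ are identically distributed, V,V′ are identically distributed, and (U,V) is independent of (U′,V′)), then E[Θ(U − U′)] + E[Θ(V − V′)] ≤ 2 E[Θ(U − V′)] in [0,∞]. -/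
open MeasureTheory ProbabilityTheory
open scoped ENNReal RealInnerProductSpace

/-- `ρ` is a Lévy measure on `ℝ^d ∖ {0}`: it does not charge the origin and integrates
`1 ∧ |r|²`. -/
def IsLevyMeasure {d : ℕ} (ρ : Measure (EuclideanSpace ℝ (Fin d))) : Prop :=
  ρ {0} = 0 ∧ ∫⁻ r, ENNReal.ofReal (min 1 (‖r‖ ^ 2)) ∂ρ < ∞

/-- `ρ` is symmetric: `ρ(B) = ρ(-B)` for all Borel sets `B`. -/
def IsSymmetricMeasure {d : ℕ} (ρ : Measure (EuclideanSpace ℝ (Fin d))) : Prop :=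
  ρ.map (fun r => -r) = ρ

/-- `ρ` has full (topological) support on `ℝ^d ∖ {0}`: every nonempty open set avoiding the
origin has positive measure. -/
def HasFullSupportOffZero {d : ℕ} (ρ : Measure (EuclideanSpace ℝ (Fin d))) : Prop :=
  ∀ G : Set (EuclideanSpace ℝ (Fin d)), IsOpen G → G.Nonempty →
    (0 : EuclideanSpace ℝ (Fin d)) ∉ G → 0 < ρ G

/-- The real-valued continuous negative definite function
`Θ(u) = ∫ (1 - cos ⟪u, r⟫) ρ(dr)` associated to `ρ`, with values in `[0,∞]`. -/
noncomputable def levyCndf {d : ℕ} (ρ : Measure (EuclideanSpace ℝ (Fin d)))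
    (u : EuclideanSpace ℝ (Fin d)) : ℝ≥0∞ :=
  ∫⁻ r, ENNReal.ofReal (1 - Real.cos ⟪u, r⟫) ∂ρ

section Aux

variable {d : ℕ} {Ω : Type*} [MeasurableSpace Ω] {P : Measure Ω} [IsProbabilityMeasure P]

lemma measurable_cos_inner' (r : EuclideanSpace ℝ (Fin d)) :
    Measurable (fun x : EuclideanSpace ℝ (Fin d) => Real.cos ⟪x, r⟫) :=
  Real.measurable_cos.comp (measurable_id.inner measurable_const)

lemma measurable_sin_inner' (r : EuclideanSpace ℝ (Fin d)) :
    Measurable (fun x : EuclideanSpace ℝ (Fin d) => Real.sin ⟪x, r⟫) :=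
  Real.measurable_sin.comp (measurable_id.inner measurable_const)

lemma integrable_cos_inner {W : Ω → EuclideanSpace ℝ (Fin d)} (hW : Measurable W)
    (r : EuclideanSpace ℝ (Fin d)) :
    Integrable (fun ω => Real.cos ⟪W ω, r⟫) P :=
  ⟨((measurable_cos_inner' r).comp hW).aestronglyMeasurable,
    HasFiniteIntegral.of_bounded (C := 1) (Filter.Eventually.of_forall fun ω => by
      simpa using Real.abs_cos_le_one _)⟩

lemma integrable_sin_inner {W : Ω → EuclideanSpace ℝ (Fin d)} (hW : Measurable W)
    (r : EuclideanSpace ℝ (Fin d)) :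
    Integrable (fun ω => Real.sin ⟪W ω, r⟫) P :=
  ⟨((measurable_sin_inner' r).comp hW).aestronglyMeasurable,
    HasFiniteIntegral.of_bounded (C := 1) (Filter.Eventually.of_forall fun ω => by
      simpa using Real.abs_sin_le_one _)⟩

lemma integral_cos_inner_sub {W W' : Ω → EuclideanSpace ℝ (Fin d)} (hW : Measurable W)
    (hW' : Measurable W') (hind : IndepFun W W' P) (r : EuclideanSpace ℝ (Fin d)) :
    ∫ ω, Real.cos ⟪W ω - W' ω, r⟫ ∂P =
      (∫ ω, Real.cos ⟪W ω, r⟫ ∂P) * (∫ ω, Real.cos ⟪W' ω, r⟫ ∂P)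
      + (∫ ω, Real.sin ⟪W ω, r⟫ ∂P) * (∫ ω, Real.sin ⟪W' ω, r⟫ ∂P) := by
  have hc : IndepFun (fun ω => Real.cos ⟪W ω, r⟫) (fun ω => Real.cos ⟪W' ω, r⟫) P :=
    hind.comp (measurable_cos_inner' r) (measurable_cos_inner' r)
  have hs : IndepFun (fun ω => Real.sin ⟪W ω, r⟫) (fun ω => Real.sin ⟪W' ω, r⟫) P :=
    hind.comp (measurable_sin_inner' r) (measurable_sin_inner' r)
  have h1 := hc.integral_fun_mul_eq_mul_integral (integrable_cos_inner hW r).1 (integrable_cos_inner hW' r).1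
  have h2 := hs.integral_fun_mul_eq_mul_integral (integrable_sin_inner hW r).1 (integrable_sin_inner hW' r).1
  simp_rw [inner_sub_left, Real.cos_sub]
  rw [integral_add (((integrable_cos_inner hW' r).bdd_mul
      (integrable_cos_inner hW r).1 (Filter.Eventually.of_forall fun ω => by simpa using Real.abs_cos_le_one _)))
    (((integrable_sin_inner hW' r).bdd_mul
      (integrable_sin_inner hW r).1 (Filter.Eventually.of_forall fun ω => by simpa using Real.abs_sin_le_one _))),
    h1, h2]

lemma lintegral_one_sub_cos_eq {W W' : Ω → EuclideanSpace ℝ (Fin d)} (hW : Measurable W)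
    (hW' : Measurable W') (r : EuclideanSpace ℝ (Fin d)) :
    ∫⁻ ω, ENNReal.ofReal (1 - Real.cos ⟪W ω - W' ω, r⟫) ∂P =
      ENNReal.ofReal (1 - ∫ ω, Real.cos ⟪W ω - W' ω, r⟫ ∂P) := by
  have hint : Integrable (fun ω => 1 - Real.cos ⟪W ω - W' ω, r⟫) P :=
    (integrable_const 1).sub (integrable_cos_inner (hW.sub hW') r)
  rw [← ofReal_integral_eq_lintegral_ofReal hint
      (Filter.Eventually.of_forall fun ω => by simpa using Real.cos_le_one _)]
  congr 1
  rw [integral_sub (integrable_const 1) (integrable_cos_inner (W := fun ω => W ω - W' ω) (hW.sub hW') r)]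
  simp

end Aux

/-- Let `ρ` be a symmetric Lévy measure with full support and `Θ` the associated cndf.
If `(U', V')` is an independent copy of `(U, V)` (i.e. `U, U'` are identically distributed,
`V, V'` are identically distributed, and `(U, V)` is independent of `(U', V')`), then
`E[Θ(U - U')] + E[Θ(V - V')] ≤ 2 E[Θ(U - V')]` in `[0, ∞]`. -/
theorem levyCndf_sum_le_two_mul_cross {d : ℕ}
    (ρ : Measure (EuclideanSpace ℝ (Fin d)))
    (hLevy : IsLevyMeasure ρ) (hsym : IsSymmetricMeasure ρ)
    (hfull : HasFullSupportOffZero ρ)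
    {Ω : Type*} [MeasurableSpace Ω] (P : Measure Ω) [IsProbabilityMeasure P]
    (U V U' V' : Ω → EuclideanSpace ℝ (Fin d))
    (hU : Measurable U) (hV : Measurable V) (hU' : Measurable U') (hV' : Measurable V')
    (hidU : IdentDistrib U U' P P) (hidV : IdentDistrib V V' P P)
    (hindep : IndepFun (fun ω => (U ω, V ω)) (fun ω => (U' ω, V' ω)) P) :
    (∫⁻ ω, levyCndf ρ (U ω - U' ω) ∂P) + (∫⁻ ω, levyCndf ρ (V ω - V' ω) ∂P)
      ≤ 2 * ∫⁻ ω, levyCndf ρ (U ω - V' ω) ∂P := by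
  -- ρ is σ-finite
  haveI hsig : SigmaFinite ρ := by
    obtain ⟨h0, hfin⟩ := hLevy
    refine ⟨⟨⟨fun n => {0} ∪ {r | (1 : ℝ)/(n+1) ≤ ‖r‖}, fun _ => trivial, ?_, ?_⟩⟩⟩
    · intro n
      have hmeas : Measurable fun r : EuclideanSpace ℝ (Fin d) =>
          ENNReal.ofReal (min 1 (‖r‖ ^ 2)) :=
        ENNReal.measurable_ofReal.comp (measurable_const.min (measurable_norm.pow_const 2))
      have hεpos : (0 : ℝ) < ((1 : ℝ)/(n+1)) ^ 2 := by positivity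
      have hsub : {r : EuclideanSpace ℝ (Fin d) | (1 : ℝ)/(n+1) ≤ ‖r‖} ⊆
          {r | ENNReal.ofReal (((1 : ℝ)/(n+1)) ^ 2) ≤ ENNReal.ofReal (min 1 (‖r‖ ^ 2))} := by
        intro r hr
        apply ENNReal.ofReal_le_ofReal
        have h1 : ((1 : ℝ)/(n+1)) ^ 2 ≤ ‖r‖ ^ 2 := by
          apply pow_le_pow_left₀ (by positivity) hr
        have h2 : ((1 : ℝ)/(n+1)) ^ 2 ≤ 1 := by
          apply pow_le_one₀ (by positivity)
          rw [div_le_one (by positivity)]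
          linarith [Nat.cast_nonneg (α := ℝ) n]
        exact le_min h2 h1
      calc ρ ({0} ∪ {r | (1 : ℝ)/(n+1) ≤ ‖r‖})
          ≤ ρ {0} + ρ {r | (1 : ℝ)/(n+1) ≤ ‖r‖} := measure_union_le _ _
        _ = ρ {r | (1 : ℝ)/(n+1) ≤ ‖r‖} := by rw [h0, zero_add]
        _ ≤ ρ {r | ENNReal.ofReal (((1 : ℝ)/(n+1)) ^ 2) ≤
              ENNReal.ofReal (min 1 (‖r‖ ^ 2))} := measure_mono hsub
        _ ≤ (∫⁻ r, ENNReal.ofReal (min 1 (‖r‖ ^ 2)) ∂ρ) / ENNReal.ofReal (((1 : ℝ)/(n+1)) ^ 2) :=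
            meas_ge_le_lintegral_div hmeas.aemeasurable
              (by simp only [ne_eq, ENNReal.ofReal_eq_zero, not_le]; positivity)
              ENNReal.ofReal_ne_top
        _ < ∞ := ENNReal.div_lt_top hfin.ne
              (by simp only [ne_eq, ENNReal.ofReal_eq_zero, not_le]; positivity)
    · rw [Set.eq_univ_iff_forall]
      intro r
      rcases eq_or_ne r 0 with hr | hr
      · exact Set.mem_iUnion.2 ⟨0, Or.inl hr⟩
      · have hpos : (0 : ℝ) < ‖r‖ := norm_pos_iff.2 hr
        obtain ⟨n, hn⟩ := exists_nat_one_div_lt hpos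
        exact Set.mem_iUnion.2 ⟨n, Or.inr hn.le⟩
  -- measurability of the kernels on Ω × ℝ^d
  have hmeas : ∀ (W W' : Ω → EuclideanSpace ℝ (Fin d)), Measurable W → Measurable W' →
      AEMeasurable (Function.uncurry fun ω r =>
        ENNReal.ofReal (1 - Real.cos ⟪W ω - W' ω, r⟫)) (P.prod ρ) := by
    intro W W' hW hW'
    apply Measurable.aemeasurable
    apply ENNReal.measurable_ofReal.comp
    apply measurable_const.sub
    exact Real.measurable_cos.comp
      (((hW.comp measurable_fst).sub (hW'.comp measurable_fst)).inner measurable_snd)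
  -- swap the integrals
  simp only [levyCndf]
  rw [lintegral_lintegral_swap (hmeas U U' hU hU'), lintegral_lintegral_swap (hmeas V V' hV hV'),
    lintegral_lintegral_swap (hmeas U V' hU hV')]
  -- reduce to a pointwise (in r) inequality
  have hmR : ∀ (W W' : Ω → EuclideanSpace ℝ (Fin d)), Measurable W → Measurable W' →
      Measurable (fun r => ∫⁻ ω, ENNReal.ofReal (1 - Real.cos ⟪W ω - W' ω, r⟫) ∂P) := by
    intro W W' hW hW'
    apply Measurable.lintegral_prod_right
    apply ENNReal.measurable_ofReal.comp
    apply measurable_const.sub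
    exact Real.measurable_cos.comp
      (((hW.comp measurable_snd).sub (hW'.comp measurable_snd)).inner measurable_fst)
  rw [← lintegral_add_left (hmR U U' hU hU'), ← lintegral_const_mul _ (hmR U V' hU hV')]
  · apply lintegral_mono
    intro r
    dsimp only
    -- independence of the pairs
    have hUU' : IndepFun U U' P := hindep.comp measurable_fst measurable_fst
    have hVV' : IndepFun V V' P := hindep.comp measurable_snd measurable_snd
    have hUV' : IndepFun U V' P := hindep.comp measurable_fst measurable_snd
    set a := ∫ ω, Real.cos ⟪U ω, r⟫ ∂P with ha
    set b := ∫ ω, Real.sin ⟪U ω, r⟫ ∂P with hb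
    set c := ∫ ω, Real.cos ⟪V ω, r⟫ ∂P with hc
    set e := ∫ ω, Real.sin ⟪V ω, r⟫ ∂P with he
    have haU' : (∫ ω, Real.cos ⟪U' ω, r⟫ ∂P) = a :=
      ((hidU.comp (measurable_cos_inner' r)).integral_eq).symm
    have hbU' : (∫ ω, Real.sin ⟪U' ω, r⟫ ∂P) = b :=
      ((hidU.comp (measurable_sin_inner' r)).integral_eq).symm
    have hcV' : (∫ ω, Real.cos ⟪V' ω, r⟫ ∂P) = c :=
      ((hidV.comp (measurable_cos_inner' r)).integral_eq).symm
    have heV' : (∫ ω, Real.sin ⟪V' ω, r⟫ ∂P) = e :=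
      ((hidV.comp (measurable_sin_inner' r)).integral_eq).symm
    have hEuu : (∫ ω, Real.cos ⟪U ω - U' ω, r⟫ ∂P) = a * a + b * b := by
      rw [integral_cos_inner_sub hU hU' hUU' r, haU', hbU']
    have hEvv : (∫ ω, Real.cos ⟪V ω - V' ω, r⟫ ∂P) = c * c + e * e := by
      rw [integral_cos_inner_sub hV hV' hVV' r, hcV', heV']
    have hEuv : (∫ ω, Real.cos ⟪U ω - V' ω, r⟫ ∂P) = a * c + b * e := by
      rw [integral_cos_inner_sub hU hV' hUV' r, hcV', heV']
    rw [lintegral_one_sub_cos_eq hU hU' r, lintegral_one_sub_cos_eq hV hV' r,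
      lintegral_one_sub_cos_eq hU hV' r, hEuu, hEvv, hEuv]
    -- nonnegativity of the arguments
    have h1 : 0 ≤ 1 - (a * a + b * b) := by
      rw [← hEuu]; have := Real.cos_le_one; 
      have hle : (∫ ω, Real.cos ⟪U ω - U' ω, r⟫ ∂P) ≤ 1 := by
        calc (∫ ω, Real.cos ⟪U ω - U' ω, r⟫ ∂P) ≤ ∫ _, (1 : ℝ) ∂P :=
              integral_mono (integrable_cos_inner (hU.sub hU') r) (integrable_const 1)
                (fun ω => Real.cos_le_one _)
          _ = 1 := by simp
      linarith
    have h2 : 0 ≤ 1 - (c * c + e * e) := by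
      rw [← hEvv]
      have hle : (∫ ω, Real.cos ⟪V ω - V' ω, r⟫ ∂P) ≤ 1 := by
        calc (∫ ω, Real.cos ⟪V ω - V' ω, r⟫ ∂P) ≤ ∫ _, (1 : ℝ) ∂P :=
              integral_mono (integrable_cos_inner (hV.sub hV') r) (integrable_const 1)
                (fun ω => Real.cos_le_one _)
          _ = 1 := by simp
      linarith
    rw [two_mul, ← ENNReal.ofReal_add h1 h2, ← ENNReal.ofReal_add (by nlinarith [sq_nonneg (a - c), sq_nonneg (b - e)]) (by nlinarith [sq_nonneg (a - c), sq_nonneg (b - e)])]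
    apply ENNReal.ofReal_le_ofReal
    nlinarith [sq_nonneg (a - c), sq_nonneg (b - e)]
end

section
/- Let ρ be a symmetric Lévy measure on ℝ^d∖{0} with full support and Θ(u) = ∫(1 − cos⟨u,r⟩) ρ(dr) the associated real-valued continuous negative definite function. For all d-dimensional random variables U, V one has, in [0,∞], d_ρ²(law(U), law(V)) ≤ 4(E[Θ(U)] + E[Θ(V)]), where d_ρ(law(U), law(V)) = (∫ |f_U(r) − f_V(r)|² ρ(dr))^{1/2} and f_U, f_V denote the characteristic functions of U and V. -/
open MeasureTheory ProbabilityTheory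
open scoped ENNReal RealInnerProductSpace

/-- The characteristic function `f_U(r) = E[exp(i ⟪r, U⟫)]` of a random variable `U`. -/
noncomputable def charFn {d : ℕ} {Ω : Type*} [MeasurableSpace Ω] (P : Measure Ω)
    (U : Ω → EuclideanSpace ℝ (Fin d)) (r : EuclideanSpace ℝ (Fin d)) : ℂ :=
  ∫ ω, Complex.exp (Complex.I * (⟪r, U ω⟫ : ℝ)) ∂P

/-! ### Auxiliary lemmas -/

/-- Elementary inequality: if `‖a‖ ≤ 1` and `‖b‖ ≤ 1` then
`‖a - b‖² ≤ 4((1 - Re a) + (1 - Re b))`. -/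
private lemma key_sq_ineq (a b : ℂ) (ha : ‖a‖ ≤ 1) (hb : ‖b‖ ≤ 1) :
    ‖a - b‖ ^ 2 ≤ 4 * ((1 - a.re) + (1 - b.re)) := by
  have h1 : ‖a‖^2 = a.re^2 + a.im^2 := by
    rw [Complex.sq_norm, Complex.normSq_apply]; ring
  have h2 : ‖b‖^2 = b.re^2 + b.im^2 := by
    rw [Complex.sq_norm, Complex.normSq_apply]; ring
  have h3 : ‖a - b‖^2 = (a.re - b.re)^2 + (a.im - b.im)^2 := by
    rw [Complex.sq_norm, Complex.normSq_apply]
    simp [Complex.sub_re, Complex.sub_im]; ring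
  have ha' : a.re^2 + a.im^2 ≤ 1 := by nlinarith [norm_nonneg a]
  have hb' : b.re^2 + b.im^2 ≤ 1 := by nlinarith [norm_nonneg b]
  rw [h3]
  nlinarith [sq_nonneg (a.re + b.re - 2), sq_nonneg (a.im - b.im), sq_nonneg (a.im + b.im)]

section Aux

variable {d : ℕ} {Ω : Type*} [MeasurableSpace Ω] (P : Measure Ω) [IsProbabilityMeasure P]
    (W : Ω → EuclideanSpace ℝ (Fin d)) (hW : Measurable W) (r : EuclideanSpace ℝ (Fin d))
include hW

private lemma exp_int : Integrable (fun ω => Complex.exp (Complex.I * (⟪r, W ω⟫ : ℝ))) P := by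
  refine Integrable.mono' (integrable_const 1) ?_ (ae_of_all _ fun ω => ?_)
  · exact (Complex.measurable_exp.comp (measurable_const.mul
      (Complex.measurable_ofReal.comp (measurable_const.inner hW)))).aestronglyMeasurable
  · rw [mul_comm, Complex.norm_exp_ofReal_mul_I]

omit hW in
private lemma charFn_norm_le_one : ‖charFn P W r‖ ≤ 1 := by
  refine (norm_integral_le_integral_norm _).trans ?_
  have h : ∀ ω, ‖Complex.exp (Complex.I * (⟪r, W ω⟫ : ℝ))‖ = 1 := fun ω => by
    rw [mul_comm, Complex.norm_exp_ofReal_mul_I]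
  simp only [h]
  simp

private lemma lint_eq : ∫⁻ ω, ENNReal.ofReal (1 - Real.cos ⟪r, W ω⟫) ∂P
    = ENNReal.ofReal (1 - (charFn P W r).re) := by
  have hcos : Measurable fun ω => Real.cos ⟪r, W ω⟫ :=
    Real.measurable_cos.comp (measurable_const.inner hW)
  have hint : Integrable (fun ω => 1 - Real.cos ⟪r, W ω⟫) P := by
    refine Integrable.mono' (integrable_const 2) ((measurable_const.sub hcos).aestronglyMeasurable)
      (ae_of_all _ fun ω => ?_)
    rw [Real.norm_eq_abs, abs_le]
    constructor <;> nlinarith [Real.cos_le_one ⟪r, W ω⟫, Real.neg_one_le_cos ⟪r, W ω⟫]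
  rw [← ofReal_integral_eq_lintegral_ofReal hint (ae_of_all _ fun ω => by
    simp only [Pi.zero_apply]; nlinarith [Real.cos_le_one ⟪r, W ω⟫])]
  congr 1
  have hre : (charFn P W r).re = ∫ ω, Real.cos ⟪r, W ω⟫ ∂P := by
    rw [charFn, ← RCLike.re_to_complex, ← integral_re (exp_int P W hW r)]
    congr 1; ext ω
    rw [RCLike.re_to_complex, mul_comm, Complex.exp_ofReal_mul_I_re]
  have hcosi : Integrable (fun ω => Real.cos ⟪r, W ω⟫) P := by
    refine Integrable.mono' (integrable_const 1) hcos.aestronglyMeasurable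
      (ae_of_all _ fun ω => by rw [Real.norm_eq_abs]; exact Real.abs_cos_le_one _)
  rw [integral_sub (integrable_const 1) hcosi, hre]
  simp

end Aux

/-- A Lévy measure is σ-finite. -/
private lemma levy_sigmaFinite {d : ℕ} (ρ : Measure (EuclideanSpace ℝ (Fin d)))
    (h0 : ρ {0} = 0) (hfin : ∫⁻ r, ENNReal.ofReal (min 1 (‖r‖ ^ 2)) ∂ρ < ∞) :
    SigmaFinite ρ := by
  have hm : Measurable fun r : EuclideanSpace ℝ (Fin d) => ENNReal.ofReal (min 1 (‖r‖ ^ 2)) :=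
    ENNReal.measurable_ofReal.comp (measurable_const.min (measurable_norm.pow_const 2))
  refine ⟨⟨⟨fun n => {r | (1 / (n + 1) : ℝ) ≤ ‖r‖} ∪ {0}, fun _ => trivial, fun n => ?_, ?_⟩⟩⟩
  · set c : ℝ := 1 / (n + 1) with hc
    have hcpos : 0 < c := by positivity
    set ε : ℝ≥0∞ := ENNReal.ofReal (min 1 (c ^ 2)) with hε
    have hεpos : 0 < ε := by
      rw [hε]; apply ENNReal.ofReal_pos.2; positivity
    have hsub : {r : EuclideanSpace ℝ (Fin d) | c ≤ ‖r‖}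
        ⊆ {r | ε ≤ ENNReal.ofReal (min 1 (‖r‖ ^ 2))} := by
      intro r hr
      exact ENNReal.ofReal_le_ofReal (min_le_min le_rfl (by nlinarith [Set.mem_setOf_eq ▸ hr]))
    have hb : ε * ρ {r | ε ≤ ENNReal.ofReal (min 1 (‖r‖ ^ 2))}
        ≤ ∫⁻ r, ENNReal.ofReal (min 1 (‖r‖ ^ 2)) ∂ρ :=
      mul_meas_ge_le_lintegral₀ hm.aemeasurable ε
    have hlt : ρ {r : EuclideanSpace ℝ (Fin d) | c ≤ ‖r‖} < ∞ := by
      refine (measure_mono hsub).trans_lt ?_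
      rw [mul_comm] at hb
      have h2 := (ENNReal.le_div_iff_mul_le (Or.inl hεpos.ne')
        (Or.inl (by rw [hε]; exact ENNReal.ofReal_ne_top))).2 hb
      exact h2.trans_lt (ENNReal.div_lt_top hfin.ne hεpos.ne')
    calc ρ ({r : EuclideanSpace ℝ (Fin d) | c ≤ ‖r‖} ∪ {0})
        ≤ ρ {r | c ≤ ‖r‖} + ρ {0} := measure_union_le _ _
      _ < ∞ := by rw [h0]; simpa using hlt
  · ext r
    simp only [Set.mem_iUnion, Set.mem_union, Set.mem_setOf_eq, Set.mem_singleton_iff,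
      Set.mem_univ, iff_true]
    rcases eq_or_ne r 0 with hr | hr
    · exact ⟨0, Or.inr hr⟩
    · obtain ⟨n, hn⟩ := exists_nat_one_div_lt (norm_pos_iff.2 hr)
      exact ⟨n, Or.inl hn.le⟩

/-- Let `ρ` be a symmetric Lévy measure with full support and `Θ` the associated cndf.
For all `d`-dimensional random variables `U, V`, in `[0,∞]`,
`d_ρ²(law U, law V) = ∫ |f_U - f_V|² dρ ≤ 4 (E[Θ(U)] + E[Θ(V)])`. -/
theorem dRho_sq_le_four_mul_moments {d : ℕ}
    (ρ : Measure (EuclideanSpace ℝ (Fin d)))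
    (hLevy : IsLevyMeasure ρ) (hsym : IsSymmetricMeasure ρ)
    (hfull : HasFullSupportOffZero ρ)
    {Ω : Type*} [MeasurableSpace Ω] (P : Measure Ω) [IsProbabilityMeasure P]
    (U V : Ω → EuclideanSpace ℝ (Fin d))
    (hU : Measurable U) (hV : Measurable V) :
    (∫⁻ r, (‖charFn P U r - charFn P V r‖₊ : ℝ≥0∞) ^ 2 ∂ρ)
      ≤ 4 * ((∫⁻ ω, levyCndf ρ (U ω) ∂P) + ∫⁻ ω, levyCndf ρ (V ω) ∂P) := by
  obtain ⟨h0, hfin⟩ := hLevy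
  haveI : SigmaFinite ρ := levy_sigmaFinite ρ h0 hfin
  set FU : EuclideanSpace ℝ (Fin d) → ℝ≥0∞ :=
    fun r => ∫⁻ ω, ENNReal.ofReal (1 - Real.cos ⟪r, U ω⟫) ∂P with hFU
  set FV : EuclideanSpace ℝ (Fin d) → ℝ≥0∞ :=
    fun r => ∫⁻ ω, ENNReal.ofReal (1 - Real.cos ⟪r, V ω⟫) ∂P with hFV
  -- uncurried measurability
  have hprodU : Measurable (Function.uncurry
      fun (r : EuclideanSpace ℝ (Fin d)) (ω : Ω) =>
        ENNReal.ofReal (1 - Real.cos ⟪r, U ω⟫)) := by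
    have : Measurable fun p : EuclideanSpace ℝ (Fin d) × Ω =>
        ENNReal.ofReal (1 - Real.cos ⟪p.1, U p.2⟫) :=
      ENNReal.measurable_ofReal.comp (measurable_const.sub
        (Real.measurable_cos.comp (measurable_fst.inner (hU.comp measurable_snd))))
    exact this
  have hprodV : Measurable (Function.uncurry
      fun (r : EuclideanSpace ℝ (Fin d)) (ω : Ω) =>
        ENNReal.ofReal (1 - Real.cos ⟪r, V ω⟫)) := by
    have : Measurable fun p : EuclideanSpace ℝ (Fin d) × Ω =>
        ENNReal.ofReal (1 - Real.cos ⟪p.1, V p.2⟫) :=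
      ENNReal.measurable_ofReal.comp (measurable_const.sub
        (Real.measurable_cos.comp (measurable_fst.inner (hV.comp measurable_snd))))
    exact this
  -- pointwise bound
  have hpt : ∀ r, (‖charFn P U r - charFn P V r‖₊ : ℝ≥0∞) ^ 2 ≤ 4 * (FU r + FV r) := by
    intro r
    set a := charFn P U r
    set b := charFn P V r
    have ha : ‖a‖ ≤ 1 := charFn_norm_le_one P U r
    have hb : ‖b‖ ≤ 1 := charFn_norm_le_one P V r
    have h1a : 0 ≤ 1 - a.re := by
      have := (Complex.abs_re_le_norm a).trans le_rfl
      have := (le_abs_self a.re).trans ((this).trans ha)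
      linarith
    have h1b : 0 ≤ 1 - b.re := by
      have := (Complex.abs_re_le_norm b).trans le_rfl
      have := (le_abs_self b.re).trans ((this).trans hb)
      linarith
    calc (‖a - b‖₊ : ℝ≥0∞) ^ 2
        = ENNReal.ofReal (‖a - b‖ ^ 2) := by
          rw [ENNReal.ofReal_pow (norm_nonneg _), ← ENNReal.ofReal_coe_nnreal, coe_nnnorm]
      _ ≤ ENNReal.ofReal (4 * ((1 - a.re) + (1 - b.re))) :=
          ENNReal.ofReal_le_ofReal (key_sq_ineq a b ha hb)
      _ = 4 * (ENNReal.ofReal (1 - a.re) + ENNReal.ofReal (1 - b.re)) := by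
          rw [ENNReal.ofReal_mul (by norm_num), ENNReal.ofReal_add h1a h1b]
          norm_num
      _ = 4 * (FU r + FV r) := by
          rw [hFU, hFV]
          simp only []
          rw [lint_eq P U hU r, lint_eq P V hV r]
  have hFUm : Measurable FU := hprodU.lintegral_prod_right
  have hFVm : Measurable FV := hprodV.lintegral_prod_right
  have hlevy : ∀ w : EuclideanSpace ℝ (Fin d),
      levyCndf ρ w = ∫⁻ r, ENNReal.ofReal (1 - Real.cos ⟪r, w⟫) ∂ρ := by
    intro w
    unfold levyCndf
    congr 1; funext r; rw [real_inner_comm]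
  calc (∫⁻ r, (‖charFn P U r - charFn P V r‖₊ : ℝ≥0∞) ^ 2 ∂ρ)
      ≤ ∫⁻ r, 4 * (FU r + FV r) ∂ρ := lintegral_mono hpt
    _ = 4 * ((∫⁻ r, FU r ∂ρ) + ∫⁻ r, FV r ∂ρ) := by
        rw [lintegral_const_mul' _ _ (by norm_num), lintegral_add_left hFUm]
    _ = 4 * ((∫⁻ ω, levyCndf ρ (U ω) ∂P) + ∫⁻ ω, levyCndf ρ (V ω) ∂P) := by
        congr 1
        rw [hFU, hFV]
        rw [lintegral_lintegral_swap hprodU.aemeasurable,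
          lintegral_lintegral_swap hprodV.aemeasurable]
        simp only [hlevy]
end

section
/- Let ρ be a symmetric Lévy measure on ℝ^d∖{0} with full support and Θ(u) = ∫(1 − cos⟨u,r⟩) ρ(dr) the associated real-valued continuous negative definite function. Let U, V be d-dimensional random variables with E[Θ(U)] + E[Θ(V)] < ∞, and let (U′,V′) be an independent copy of (U,V). Then d_ρ²(law(U), law(V)) = 2 E[Θ(U − V′)] − E[Θ(U − U′)] − E[Θ(V − V′)], and all terms in this identity are finite. -/
open MeasureTheory ProbabilityTheory
open scoped ENNReal RealInnerProductSpace

section Aux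
variable {d : ℕ}

lemma one_sub_cos_sub_le (x y : ℝ) :
    1 - Real.cos (x - y) ≤ 2 * (1 - Real.cos x) + 2 * (1 - Real.cos y) := by
  have hx := Real.sin_sq_add_cos_sq x
  have hy := Real.sin_sq_add_cos_sq y
  rw [Real.cos_sub]
  nlinarith [sq_nonneg (Real.sin x + Real.sin y), sq_nonneg (Real.cos x + Real.cos y - 2)]

lemma measurable_levyKernel :
    Measurable (fun q : EuclideanSpace ℝ (Fin d) × EuclideanSpace ℝ (Fin d) =>
      ENNReal.ofReal (1 - Real.cos ⟪q.1, q.2⟫)) :=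
  ENNReal.measurable_ofReal.comp
    (continuous_const.sub (Real.continuous_cos.comp
      (continuous_fst.inner continuous_snd))).measurable

lemma sigmaFinite_of_isLevyMeasure (ρ : Measure (EuclideanSpace ℝ (Fin d)))
    (h : IsLevyMeasure ρ) : SigmaFinite ρ := by
  obtain ⟨h0, hint⟩ := h
  set f : EuclideanSpace ℝ (Fin d) → ℝ≥0∞ := fun r => ENNReal.ofReal (min 1 (‖r‖ ^ 2)) with hf
  have hfm : Measurable f :=
    ENNReal.measurable_ofReal.comp ((continuous_const.min ((continuous_norm).pow 2)).measurable)
  apply MeasureTheory.Measure.sigmaFinite_of_countable (Set.countable_range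
    (fun n : ℕ => {r : EuclideanSpace ℝ (Fin d) | (1:ℝ)/(n+1) ≤ ‖r‖} ∪ {0}))
  · rintro s ⟨n, rfl⟩
    set ε : ℝ≥0∞ := ENNReal.ofReal (min 1 (((1:ℝ)/(n+1)) ^ 2)) with hε
    have hεpos : 0 < min 1 (((1:ℝ)/(n+1)) ^ 2) := by positivity
    have hε0 : ε ≠ 0 := by rw [hε]; exact (ENNReal.ofReal_pos.mpr hεpos).ne'
    have hsub : {r : EuclideanSpace ℝ (Fin d) | (1:ℝ)/(n+1) ≤ ‖r‖}
        ⊆ {r | ε ≤ f r} := by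
      intro r hr
      simp only [Set.mem_setOf_eq] at hr ⊢
      rw [hε, hf]
      apply ENNReal.ofReal_le_ofReal
      have h1 : ((1:ℝ)/(n+1)) ^ 2 ≤ ‖r‖ ^ 2 := by
        apply pow_le_pow_left₀ (by positivity) hr
      exact min_le_min le_rfl h1
    calc ρ ({r : EuclideanSpace ℝ (Fin d) | (1:ℝ)/(n+1) ≤ ‖r‖} ∪ {0})
        ≤ ρ {r | (1:ℝ)/(n+1) ≤ ‖r‖} + ρ {0} := measure_union_le _ _
      _ = ρ {r | (1:ℝ)/(n+1) ≤ ‖r‖} := by rw [h0, add_zero]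
      _ ≤ ρ {r | ε ≤ f r} := measure_mono hsub
      _ ≤ (∫⁻ r, f r ∂ρ) / ε := by
          rw [ENNReal.le_div_iff_mul_le (Or.inl hε0) (Or.inl (by simp [hε]))]
          rw [mul_comm]
          exact mul_meas_ge_le_lintegral hfm ε
      _ < ∞ := ENNReal.div_lt_top hint.ne hε0
  · rw [Set.sUnion_range]
    ext r
    simp only [Set.mem_iUnion, Set.mem_union, Set.mem_setOf_eq, Set.mem_singleton_iff,
      Set.mem_univ, iff_true]
    rcases eq_or_ne r 0 with rfl | hr
    · exact ⟨0, Or.inr rfl⟩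
    · obtain ⟨n, hn⟩ := exists_nat_one_div_lt (norm_pos_iff.mpr hr)
      exact ⟨n, Or.inl hn.le⟩

set_option maxHeartbeats 1000000 in
lemma measurable_levyCndf (ρ : Measure (EuclideanSpace ℝ (Fin d))) [SigmaFinite ρ] :
    Measurable (levyCndf ρ) := by
  unfold levyCndf
  exact Measurable.lintegral_prod_right' (measurable_levyKernel (d := d))

lemma levyCndf_sub_le (ρ : Measure (EuclideanSpace ℝ (Fin d))) (u v : EuclideanSpace ℝ (Fin d)) :
    levyCndf ρ (u - v) ≤ 2 * levyCndf ρ u + 2 * levyCndf ρ v := by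
  have hm : ∀ w : EuclideanSpace ℝ (Fin d),
      Measurable (fun r : EuclideanSpace ℝ (Fin d) => ENNReal.ofReal (1 - Real.cos ⟪w, r⟫)) :=
    fun w => ENNReal.measurable_ofReal.comp
      (continuous_const.sub (Real.continuous_cos.comp
        (continuous_const.inner continuous_id))).measurable
  calc levyCndf ρ (u - v)
      ≤ ∫⁻ r, (2 * ENNReal.ofReal (1 - Real.cos ⟪u, r⟫)
          + 2 * ENNReal.ofReal (1 - Real.cos ⟪v, r⟫)) ∂ρ := by
        apply lintegral_mono
        intro r
        have h := one_sub_cos_sub_le ⟪u, r⟫ ⟪v, r⟫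
        have h1 : (0:ℝ) ≤ 1 - Real.cos ⟪u, r⟫ := by nlinarith [Real.cos_le_one ⟪u, r⟫]
        have h2 : (0:ℝ) ≤ 1 - Real.cos ⟪v, r⟫ := by nlinarith [Real.cos_le_one ⟪v, r⟫]
        simp only [inner_sub_left]
        calc ENNReal.ofReal (1 - Real.cos (⟪u, r⟫ - ⟪v, r⟫))
            ≤ ENNReal.ofReal (2 * (1 - Real.cos ⟪u, r⟫) + 2 * (1 - Real.cos ⟪v, r⟫)) :=
              ENNReal.ofReal_le_ofReal h
          _ = 2 * ENNReal.ofReal (1 - Real.cos ⟪u, r⟫)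
              + 2 * ENNReal.ofReal (1 - Real.cos ⟪v, r⟫) := by
              rw [ENNReal.ofReal_add (by positivity) (by positivity),
                ENNReal.ofReal_mul (by norm_num), ENNReal.ofReal_mul (by norm_num)]
              norm_num
    _ = 2 * levyCndf ρ u + 2 * levyCndf ρ v := by
        rw [lintegral_add_left ((hm u).const_mul 2), lintegral_const_mul 2 (hm u),
          lintegral_const_mul 2 (hm v)]
        rfl

lemma integrable_of_bound {α : Type*} [MeasurableSpace α] (ν : Measure α) [IsFiniteMeasure ν]
    (f : α → ℝ) (hf : AEStronglyMeasurable f ν) (c : ℝ) (h : ∀ a, |f a| ≤ c) :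
    Integrable f ν :=
  Integrable.mono' (integrable_const c) hf (Filter.Eventually.of_forall fun a => by
    simpa using h a)

lemma lintegral_levyCndf_eq (ρ : Measure (EuclideanSpace ℝ (Fin d))) [SigmaFinite ρ]
    {α : Type*} [MeasurableSpace α] (ν : Measure α) [IsProbabilityMeasure ν]
    (g : α → EuclideanSpace ℝ (Fin d)) (hg : Measurable g) :
    ∫⁻ a, levyCndf ρ (g a) ∂ν
      = ∫⁻ r, ENNReal.ofReal (1 - ∫ a, Real.cos ⟪g a, r⟫ ∂ν) ∂ρ := by
  have hmeas : AEMeasurable (Function.uncurry fun a r =>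
      ENNReal.ofReal (1 - Real.cos ⟪g a, r⟫)) (ν.prod ρ) :=
    ((measurable_levyKernel (d := d)).comp
      ((hg.comp measurable_fst).prodMk measurable_snd)).aemeasurable
  unfold levyCndf
  rw [lintegral_lintegral_swap hmeas]
  refine lintegral_congr fun r => ?_
  have hmcos : Measurable fun a => Real.cos ⟪g a, r⟫ :=
    (Real.continuous_cos.comp (continuous_id.inner continuous_const)).measurable.comp hg
  have hcos' : Integrable (fun a => Real.cos ⟪g a, r⟫) ν :=
    integrable_of_bound ν _ hmcos.aestronglyMeasurable 1 fun a => Real.abs_cos_le_one _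
  have hcos : Integrable (fun a => 1 - Real.cos ⟪g a, r⟫) ν := (integrable_const 1).sub hcos'
  rw [← ofReal_integral_eq_lintegral_ofReal hcos (Filter.Eventually.of_forall fun a =>
    show (0:ℝ) ≤ 1 - Real.cos ⟪g a, r⟫ from sub_nonneg.mpr (Real.cos_le_one _))]
  congr 1
  rw [integral_sub (integrable_const 1) hcos']
  simp

end Aux

section Char
variable {d : ℕ} {Ω : Type*} [MeasurableSpace Ω] (P : Measure Ω) [IsProbabilityMeasure P]

lemma abs_mul_le_one' {x y : ℝ} (hx : |x| ≤ 1) (hy : |y| ≤ 1) : |x * y| ≤ 1 := by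
  rw [abs_mul]; nlinarith [abs_nonneg x, abs_nonneg y]

lemma charFn_integrable (U : Ω → EuclideanSpace ℝ (Fin d)) (hU : Measurable U)
    (r : EuclideanSpace ℝ (Fin d)) :
    Integrable (fun ω => Complex.exp (Complex.I * (⟪r, U ω⟫ : ℝ))) P := by
  have hm : Measurable fun ω => Complex.exp (Complex.I * (⟪r, U ω⟫ : ℝ)) := by
    apply Complex.measurable_exp.comp
    apply Measurable.const_mul
    exact Complex.measurable_ofReal.comp
      (((continuous_const.inner continuous_id).measurable).comp hU)
  refine Integrable.mono' (integrable_const 1) hm.aestronglyMeasurable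
    (Filter.Eventually.of_forall fun ω => ?_)
  rw [mul_comm]
  rw [Complex.norm_exp_ofReal_mul_I]

lemma charFn_re (U : Ω → EuclideanSpace ℝ (Fin d)) (hU : Measurable U)
    (r : EuclideanSpace ℝ (Fin d)) :
    (charFn P U r).re = ∫ ω, Real.cos ⟪U ω, r⟫ ∂P := by
  rw [charFn, ← RCLike.re_to_complex, ← integral_re (charFn_integrable P U hU r)]
  refine integral_congr_ae (Filter.Eventually.of_forall fun ω => ?_)
  simp only [RCLike.re_to_complex]
  rw [mul_comm, Complex.exp_ofReal_mul_I_re, real_inner_comm]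

lemma charFn_im (U : Ω → EuclideanSpace ℝ (Fin d)) (hU : Measurable U)
    (r : EuclideanSpace ℝ (Fin d)) :
    (charFn P U r).im = ∫ ω, Real.sin ⟪U ω, r⟫ ∂P := by
  rw [charFn, ← RCLike.im_to_complex, ← integral_im (charFn_integrable P U hU r)]
  refine integral_congr_ae (Filter.Eventually.of_forall fun ω => ?_)
  simp only [RCLike.im_to_complex]
  rw [mul_comm, Complex.exp_ofReal_mul_I_im, real_inner_comm]

lemma charFn_norm_le_one_s6 (U : Ω → EuclideanSpace ℝ (Fin d))
    (r : EuclideanSpace ℝ (Fin d)) : ‖charFn P U r‖ ≤ 1 := by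
  rw [charFn]
  calc ‖∫ ω, Complex.exp (Complex.I * (⟪r, U ω⟫ : ℝ)) ∂P‖
      ≤ ∫ ω, ‖Complex.exp (Complex.I * (⟪r, U ω⟫ : ℝ))‖ ∂P := norm_integral_le_integral_norm _
    _ = ∫ (_ : Ω), (1:ℝ) ∂P := integral_congr_ae (Filter.Eventually.of_forall fun ω =>
        show ‖Complex.exp (Complex.I * (⟪r, U ω⟫ : ℝ))‖ = 1 by
          rw [mul_comm, Complex.norm_exp_ofReal_mul_I])
    _ = 1 := by simp

end Char

lemma cos_integral_split {d : ℕ}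
    (μ2 : Measure (EuclideanSpace ℝ (Fin d) × EuclideanSpace ℝ (Fin d)))
    [IsProbabilityMeasure μ2]
    (f g : EuclideanSpace ℝ (Fin d) × EuclideanSpace ℝ (Fin d) → EuclideanSpace ℝ (Fin d))
    (hf : Measurable f) (hg : Measurable g) (r : EuclideanSpace ℝ (Fin d)) :
    ∫ p, Real.cos ⟪f p.1 - g p.2, r⟫ ∂(μ2.prod μ2)
      = (∫ x, Real.cos ⟪f x, r⟫ ∂μ2) * (∫ x, Real.cos ⟪g x, r⟫ ∂μ2)
        + (∫ x, Real.sin ⟪f x, r⟫ ∂μ2) * (∫ x, Real.sin ⟪g x, r⟫ ∂μ2) := by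
  have mif : Measurable fun x => ⟪f x, r⟫ :=
    (continuous_id.inner continuous_const).measurable.comp hf
  have mig : Measurable fun x => ⟪g x, r⟫ :=
    (continuous_id.inner continuous_const).measurable.comp hg
  have mcf := Real.measurable_cos.comp mif
  have msf := Real.measurable_sin.comp mif
  have mcg := Real.measurable_cos.comp mig
  have msg := Real.measurable_sin.comp mig
  have h1 : Integrable (fun p => Real.cos ⟪f p.1, r⟫ * Real.cos ⟪g p.2, r⟫) (μ2.prod μ2) :=
    integrable_of_bound _ _
      ((mcf.comp measurable_fst).mul (mcg.comp measurable_snd)).aestronglyMeasurable 1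
      (fun p => abs_mul_le_one' (Real.abs_cos_le_one _) (Real.abs_cos_le_one _))
  have h2 : Integrable (fun p => Real.sin ⟪f p.1, r⟫ * Real.sin ⟪g p.2, r⟫) (μ2.prod μ2) :=
    integrable_of_bound _ _
      ((msf.comp measurable_fst).mul (msg.comp measurable_snd)).aestronglyMeasurable 1
      (fun p => abs_mul_le_one' (Real.abs_sin_le_one _) (Real.abs_sin_le_one _))
  calc ∫ p, Real.cos ⟪f p.1 - g p.2, r⟫ ∂(μ2.prod μ2)
      = ∫ p, (Real.cos ⟪f p.1, r⟫ * Real.cos ⟪g p.2, r⟫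
          + Real.sin ⟪f p.1, r⟫ * Real.sin ⟪g p.2, r⟫) ∂(μ2.prod μ2) :=
        integral_congr_ae (Filter.Eventually.of_forall fun p => by
          simp only [inner_sub_left, Real.cos_sub])
    _ = _ := by
      rw [integral_add h1 h2]
      congr 1
      · exact integral_prod_mul (fun x => Real.cos ⟪f x, r⟫) (fun x => Real.cos ⟪g x, r⟫)
      · exact integral_prod_mul (fun x => Real.sin ⟪f x, r⟫) (fun x => Real.sin ⟪g x, r⟫)

lemma final_combine {α : Type*} [MeasurableSpace α] (ρ : Measure α) (a b c s : α → ℝ)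
    (ma : Measurable a) (mb : Measurable b) (mc : Measurable c) (ms : Measurable s)
    (hA : ∀ r, a r ^ 2 + b r ^ 2 ≤ 1) (hB : ∀ r, c r ^ 2 + s r ^ 2 ≤ 1)
    (IA : ∫⁻ r, ENNReal.ofReal (1 - (a r * a r + b r * b r)) ∂ρ < ∞)
    (IB : ∫⁻ r, ENNReal.ofReal (1 - (c r * c r + s r * s r)) ∂ρ < ∞)
    (IC : ∫⁻ r, ENNReal.ofReal (1 - (a r * c r + b r * s r)) ∂ρ < ∞) :
    (∫⁻ r, ENNReal.ofReal ((a r - c r) ^ 2 + (b r - s r) ^ 2) ∂ρ) < ∞ ∧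
    (∫⁻ r, ENNReal.ofReal ((a r - c r) ^ 2 + (b r - s r) ^ 2) ∂ρ).toReal
      = 2 * (∫⁻ r, ENNReal.ofReal (1 - (a r * c r + b r * s r)) ∂ρ).toReal
        - (∫⁻ r, ENNReal.ofReal (1 - (a r * a r + b r * b r)) ∂ρ).toReal
        - (∫⁻ r, ENNReal.ofReal (1 - (c r * c r + s r * s r)) ∂ρ).toReal := by
  have hDnn : ∀ r, (0:ℝ) ≤ (a r - c r) ^ 2 + (b r - s r) ^ 2 := fun r => by positivity
  have hAnn : ∀ r, (0:ℝ) ≤ 1 - (a r * a r + b r * b r) := fun r => by nlinarith [hA r]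
  have hBnn : ∀ r, (0:ℝ) ≤ 1 - (c r * c r + s r * s r) := fun r => by nlinarith [hB r]
  have hCnn : ∀ r, (0:ℝ) ≤ 1 - (a r * c r + b r * s r) := fun r => by
    nlinarith [sq_nonneg (a r - c r), sq_nonneg (b r - s r), hA r, hB r]
  have mA : Measurable fun r => ENNReal.ofReal (1 - (a r * a r + b r * b r)) :=
    ENNReal.measurable_ofReal.comp (measurable_const.sub ((ma.mul ma).add (mb.mul mb)))
  have mB : Measurable fun r => ENNReal.ofReal (1 - (c r * c r + s r * s r)) :=
    ENNReal.measurable_ofReal.comp (measurable_const.sub ((mc.mul mc).add (ms.mul ms)))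
  have hptw : ∀ r, ENNReal.ofReal ((a r - c r) ^ 2 + (b r - s r) ^ 2)
      + ENNReal.ofReal (1 - (a r * a r + b r * b r))
      + ENNReal.ofReal (1 - (c r * c r + s r * s r))
      = 2 * ENNReal.ofReal (1 - (a r * c r + b r * s r)) := fun r => by
    rw [two_mul, ← ENNReal.ofReal_add (hDnn r) (hAnn r),
      ← ENNReal.ofReal_add (add_nonneg (hDnn r) (hAnn r)) (hBnn r),
      ← ENNReal.ofReal_add (hCnn r) (hCnn r)]
    congr 1
    ring
  have hsum : (∫⁻ r, ENNReal.ofReal ((a r - c r) ^ 2 + (b r - s r) ^ 2) ∂ρ)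
      + (∫⁻ r, ENNReal.ofReal (1 - (a r * a r + b r * b r)) ∂ρ)
      + (∫⁻ r, ENNReal.ofReal (1 - (c r * c r + s r * s r)) ∂ρ)
      = 2 * ∫⁻ r, ENNReal.ofReal (1 - (a r * c r + b r * s r)) ∂ρ := by
    rw [← lintegral_add_right _ mA, ← lintegral_add_right _ mB,
      ← lintegral_const_mul' 2 _ ENNReal.ofNat_ne_top]
    exact lintegral_congr hptw
  have hC2 : 2 * (∫⁻ r, ENNReal.ofReal (1 - (a r * c r + b r * s r)) ∂ρ) < ∞ :=
    ENNReal.mul_lt_top ENNReal.ofNat_lt_top IC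
  have hDfin : (∫⁻ r, ENNReal.ofReal ((a r - c r) ^ 2 + (b r - s r) ^ 2) ∂ρ) < ∞ := by
    refine lt_of_le_of_lt ?_ (hsum ▸ hC2)
    exact le_add_right (le_add_right le_rfl)
  refine ⟨hDfin, ?_⟩
  have ht := congrArg ENNReal.toReal hsum
  rw [ENNReal.toReal_add (ENNReal.add_ne_top.mpr ⟨hDfin.ne, IA.ne⟩) IB.ne,
    ENNReal.toReal_add hDfin.ne IA.ne, ENNReal.toReal_mul] at ht
  norm_num at ht
  linarith [ht]


/-- Let `ρ` be a symmetric Lévy measure with full support and `Θ` the associated cndf.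
Let `U, V` satisfy `E[Θ(U)] + E[Θ(V)] < ∞` and let `(U', V')` be an independent copy of
`(U, V)`. Then `d_ρ²(law U, law V) = 2 E[Θ(U - V')] - E[Θ(U - U')] - E[Θ(V - V')]`,
and all terms in this identity are finite. -/
theorem dRho_sq_eq_levyCndf_expectations {d : ℕ}
    (ρ : Measure (EuclideanSpace ℝ (Fin d)))
    (hLevy : IsLevyMeasure ρ) (hsym : IsSymmetricMeasure ρ)
    (hfull : HasFullSupportOffZero ρ)
    {Ω : Type*} [MeasurableSpace Ω] (P : Measure Ω) [IsProbabilityMeasure P]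
    (U V U' V' : Ω → EuclideanSpace ℝ (Fin d))
    (hU : Measurable U) (hV : Measurable V) (hU' : Measurable U') (hV' : Measurable V')
    (hmom : (∫⁻ ω, levyCndf ρ (U ω) ∂P) + (∫⁻ ω, levyCndf ρ (V ω) ∂P) < ∞)
    (hid : IdentDistrib (fun ω => (U ω, V ω)) (fun ω => (U' ω, V' ω)) P P)
    (hindep : IndepFun (fun ω => (U ω, V ω)) (fun ω => (U' ω, V' ω)) P) :
    (∫⁻ r, (‖charFn P U r - charFn P V r‖₊ : ℝ≥0∞) ^ 2 ∂ρ) < ∞ ∧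
      (∫⁻ ω, levyCndf ρ (U ω - V' ω) ∂P) < ∞ ∧
      (∫⁻ ω, levyCndf ρ (U ω - U' ω) ∂P) < ∞ ∧
      (∫⁻ ω, levyCndf ρ (V ω - V' ω) ∂P) < ∞ ∧
      (∫⁻ r, (‖charFn P U r - charFn P V r‖₊ : ℝ≥0∞) ^ 2 ∂ρ).toReal
        = 2 * (∫⁻ ω, levyCndf ρ (U ω - V' ω) ∂P).toReal
          - (∫⁻ ω, levyCndf ρ (U ω - U' ω) ∂P).toReal
          - (∫⁻ ω, levyCndf ρ (V ω - V' ω) ∂P).toReal := by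
  
  haveI hσ : SigmaFinite ρ := sigmaFinite_of_isLevyMeasure ρ hLevy
  have mΘ : Measurable (levyCndf ρ) := measurable_levyCndf ρ
  have hUV : Measurable fun ω => (U ω, V ω) := hU.prodMk hV
  have hUV' : Measurable fun ω => (U' ω, V' ω) := hU'.prodMk hV'
  set μ2 := P.map (fun ω => (U ω, V ω)) with hμ2
  haveI : IsProbabilityMeasure μ2 := Measure.isProbabilityMeasure_map hUV.aemeasurable
  have hbig : Measurable fun ω => ((U ω, V ω), (U' ω, V' ω)) := hUV.prodMk hUV'
  have hprod : P.map (fun ω => ((U ω, V ω), (U' ω, V' ω))) = μ2.prod μ2 := by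
    rw [(indepFun_iff_map_prod_eq_prod_map_map hUV.aemeasurable hUV'.aemeasurable).1 hindep,
      ← hid.map_eq]
  -- transfer of lintegrals to the distributional side
  have key : ∀ φ : (EuclideanSpace ℝ (Fin d) × EuclideanSpace ℝ (Fin d)) ×
      EuclideanSpace ℝ (Fin d) × EuclideanSpace ℝ (Fin d) → EuclideanSpace ℝ (Fin d),
      Measurable φ →
      ∫⁻ ω, levyCndf ρ (φ ((U ω, V ω), (U' ω, V' ω))) ∂P
        = ∫⁻ r, ENNReal.ofReal (1 - ∫ p, Real.cos ⟪φ p, r⟫ ∂(μ2.prod μ2)) ∂ρ := by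
    intro φ hφ
    rw [← lintegral_levyCndf_eq ρ (μ2.prod μ2) φ hφ, ← hprod,
      lintegral_map (show Measurable fun p => levyCndf ρ (φ p) from mΘ.comp hφ) hbig]
  -- identification of the characteristic function components
  have hre1 : ∀ r, (charFn P U r).re = ∫ x, Real.cos ⟪x.1, r⟫ ∂μ2 := by
    intro r
    refine (charFn_re P U hU r).trans ?_
    rw [hμ2]
    exact (integral_map (f := fun x : EuclideanSpace ℝ (Fin d) × EuclideanSpace ℝ (Fin d) =>
        Real.cos ⟪x.1, r⟫) hUV.aemeasurable ((Real.continuous_cos.comp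
      (continuous_fst.inner continuous_const)).aestronglyMeasurable)).symm
  have hre2 : ∀ r, (charFn P V r).re = ∫ x, Real.cos ⟪x.2, r⟫ ∂μ2 := by
    intro r
    refine (charFn_re P V hV r).trans ?_
    rw [hμ2]
    exact (integral_map (f := fun x : EuclideanSpace ℝ (Fin d) × EuclideanSpace ℝ (Fin d) =>
        Real.cos ⟪x.2, r⟫) hUV.aemeasurable ((Real.continuous_cos.comp
      (continuous_snd.inner continuous_const)).aestronglyMeasurable)).symm
  have him1 : ∀ r, (charFn P U r).im = ∫ x, Real.sin ⟪x.1, r⟫ ∂μ2 := by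
    intro r
    refine (charFn_im P U hU r).trans ?_
    rw [hμ2]
    exact (integral_map (f := fun x : EuclideanSpace ℝ (Fin d) × EuclideanSpace ℝ (Fin d) =>
        Real.sin ⟪x.1, r⟫) hUV.aemeasurable ((Real.continuous_sin.comp
      (continuous_fst.inner continuous_const)).aestronglyMeasurable)).symm
  have him2 : ∀ r, (charFn P V r).im = ∫ x, Real.sin ⟪x.2, r⟫ ∂μ2 := by
    intro r
    refine (charFn_im P V hV r).trans ?_
    rw [hμ2]
    exact (integral_map (f := fun x : EuclideanSpace ℝ (Fin d) × EuclideanSpace ℝ (Fin d) =>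
        Real.sin ⟪x.2, r⟫) hUV.aemeasurable ((Real.continuous_sin.comp
      (continuous_snd.inner continuous_const)).aestronglyMeasurable)).symm
  -- measurability of the marginal integrals
  have ma : Measurable fun r => ∫ x, Real.cos ⟪x.1, r⟫ ∂μ2 := by
    have hcont : Continuous fun q : EuclideanSpace ℝ (Fin d) ×
        (EuclideanSpace ℝ (Fin d) × EuclideanSpace ℝ (Fin d)) => Real.cos ⟪q.2.1, q.1⟫ :=
      Real.continuous_cos.comp ((continuous_snd.fst).inner continuous_fst)
    exact hcont.stronglyMeasurable.integral_prod_right'.measurable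
  have mb : Measurable fun r => ∫ x, Real.sin ⟪x.1, r⟫ ∂μ2 := by
    have hcont : Continuous fun q : EuclideanSpace ℝ (Fin d) ×
        (EuclideanSpace ℝ (Fin d) × EuclideanSpace ℝ (Fin d)) => Real.sin ⟪q.2.1, q.1⟫ :=
      Real.continuous_sin.comp ((continuous_snd.fst).inner continuous_fst)
    exact hcont.stronglyMeasurable.integral_prod_right'.measurable
  have mc : Measurable fun r => ∫ x, Real.cos ⟪x.2, r⟫ ∂μ2 := by
    have hcont : Continuous fun q : EuclideanSpace ℝ (Fin d) ×
        (EuclideanSpace ℝ (Fin d) × EuclideanSpace ℝ (Fin d)) => Real.cos ⟪q.2.2, q.1⟫ :=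
      Real.continuous_cos.comp ((continuous_snd.snd).inner continuous_fst)
    exact hcont.stronglyMeasurable.integral_prod_right'.measurable
  have ms : Measurable fun r => ∫ x, Real.sin ⟪x.2, r⟫ ∂μ2 := by
    have hcont : Continuous fun q : EuclideanSpace ℝ (Fin d) ×
        (EuclideanSpace ℝ (Fin d) × EuclideanSpace ℝ (Fin d)) => Real.sin ⟪q.2.2, q.1⟫ :=
      Real.continuous_sin.comp ((continuous_snd.snd).inner continuous_fst)
    exact hcont.stronglyMeasurable.integral_prod_right'.measurable
  -- bounds
  have hsq : ∀ W : Ω → EuclideanSpace ℝ (Fin d), ∀ r,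
      (charFn P W r).re ^ 2 + (charFn P W r).im ^ 2 ≤ 1 := by
    intro W r
    have h2 : (charFn P W r).re ^ 2 + (charFn P W r).im ^ 2 = ‖charFn P W r‖ ^ 2 := by
      rw [Complex.sq_norm, Complex.normSq_apply]; ring
    nlinarith [charFn_norm_le_one_s6 P W r, norm_nonneg (charFn P W r)]
  have hA : ∀ r, (∫ x, Real.cos ⟪x.1, r⟫ ∂μ2) ^ 2 + (∫ x, Real.sin ⟪x.1, r⟫ ∂μ2) ^ 2 ≤ 1 := by
    intro r; rw [← hre1 r, ← him1 r]; exact hsq U r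
  have hB : ∀ r, (∫ x, Real.cos ⟪x.2, r⟫ ∂μ2) ^ 2 + (∫ x, Real.sin ⟪x.2, r⟫ ∂μ2) ^ 2 ≤ 1 := by
    intro r; rw [← hre2 r, ← him2 r]; exact hsq V r
  -- the three expectation identities
  have e1 : ∫⁻ ω, levyCndf ρ (U ω - V' ω) ∂P
      = ∫⁻ r, ENNReal.ofReal (1 - ((∫ x, Real.cos ⟪x.1, r⟫ ∂μ2) * (∫ x, Real.cos ⟪x.2, r⟫ ∂μ2)
          + (∫ x, Real.sin ⟪x.1, r⟫ ∂μ2) * (∫ x, Real.sin ⟪x.2, r⟫ ∂μ2))) ∂ρ :=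
    calc ∫⁻ ω, levyCndf ρ (U ω - V' ω) ∂P
        = ∫⁻ r, ENNReal.ofReal (1 - ∫ p, Real.cos ⟪p.1.1 - p.2.2, r⟫ ∂(μ2.prod μ2)) ∂ρ :=
          key (fun p => p.1.1 - p.2.2) (measurable_fst.fst.sub measurable_snd.snd)
      _ = _ := lintegral_congr fun r => by
          rw [show (∫ p, Real.cos ⟪p.1.1 - p.2.2, r⟫ ∂(μ2.prod μ2))
              = (∫ x, Real.cos ⟪x.1, r⟫ ∂μ2) * (∫ x, Real.cos ⟪x.2, r⟫ ∂μ2)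
                + (∫ x, Real.sin ⟪x.1, r⟫ ∂μ2) * (∫ x, Real.sin ⟪x.2, r⟫ ∂μ2)
            from cos_integral_split μ2 Prod.fst Prod.snd measurable_fst measurable_snd r]
  have e2 : ∫⁻ ω, levyCndf ρ (U ω - U' ω) ∂P
      = ∫⁻ r, ENNReal.ofReal (1 - ((∫ x, Real.cos ⟪x.1, r⟫ ∂μ2) * (∫ x, Real.cos ⟪x.1, r⟫ ∂μ2)
          + (∫ x, Real.sin ⟪x.1, r⟫ ∂μ2) * (∫ x, Real.sin ⟪x.1, r⟫ ∂μ2))) ∂ρ :=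
    calc ∫⁻ ω, levyCndf ρ (U ω - U' ω) ∂P
        = ∫⁻ r, ENNReal.ofReal (1 - ∫ p, Real.cos ⟪p.1.1 - p.2.1, r⟫ ∂(μ2.prod μ2)) ∂ρ :=
          key (fun p => p.1.1 - p.2.1) (measurable_fst.fst.sub measurable_snd.fst)
      _ = _ := lintegral_congr fun r => by
          rw [show (∫ p, Real.cos ⟪p.1.1 - p.2.1, r⟫ ∂(μ2.prod μ2))
              = (∫ x, Real.cos ⟪x.1, r⟫ ∂μ2) * (∫ x, Real.cos ⟪x.1, r⟫ ∂μ2)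
                + (∫ x, Real.sin ⟪x.1, r⟫ ∂μ2) * (∫ x, Real.sin ⟪x.1, r⟫ ∂μ2)
            from cos_integral_split μ2 Prod.fst Prod.fst measurable_fst measurable_fst r]
  have e3 : ∫⁻ ω, levyCndf ρ (V ω - V' ω) ∂P
      = ∫⁻ r, ENNReal.ofReal (1 - ((∫ x, Real.cos ⟪x.2, r⟫ ∂μ2) * (∫ x, Real.cos ⟪x.2, r⟫ ∂μ2)
          + (∫ x, Real.sin ⟪x.2, r⟫ ∂μ2) * (∫ x, Real.sin ⟪x.2, r⟫ ∂μ2))) ∂ρ :=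
    calc ∫⁻ ω, levyCndf ρ (V ω - V' ω) ∂P
        = ∫⁻ r, ENNReal.ofReal (1 - ∫ p, Real.cos ⟪p.1.2 - p.2.2, r⟫ ∂(μ2.prod μ2)) ∂ρ :=
          key (fun p => p.1.2 - p.2.2) (measurable_fst.snd.sub measurable_snd.snd)
      _ = _ := lintegral_congr fun r => by
          rw [show (∫ p, Real.cos ⟪p.1.2 - p.2.2, r⟫ ∂(μ2.prod μ2))
              = (∫ x, Real.cos ⟪x.2, r⟫ ∂μ2) * (∫ x, Real.cos ⟪x.2, r⟫ ∂μ2)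
                + (∫ x, Real.sin ⟪x.2, r⟫ ∂μ2) * (∫ x, Real.sin ⟪x.2, r⟫ ∂μ2)
            from cos_integral_split μ2 Prod.snd Prod.snd measurable_snd measurable_snd r]
  -- finiteness
  obtain ⟨hIU, hIV⟩ := ENNReal.add_lt_top.mp hmom
  have hidU : ∫⁻ ω, levyCndf ρ (U' ω) ∂P = ∫⁻ ω, levyCndf ρ (U ω) ∂P :=
    ((hid.symm.comp measurable_fst).comp mΘ).lintegral_eq
  have hidV : ∫⁻ ω, levyCndf ρ (V' ω) ∂P = ∫⁻ ω, levyCndf ρ (V ω) ∂P :=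
    ((hid.symm.comp measurable_snd).comp mΘ).lintegral_eq
  have hfin : ∀ X Y : Ω → EuclideanSpace ℝ (Fin d), Measurable X → Measurable Y →
      (∫⁻ ω, levyCndf ρ (X ω) ∂P) < ∞ → (∫⁻ ω, levyCndf ρ (Y ω) ∂P) < ∞ →
      (∫⁻ ω, levyCndf ρ (X ω - Y ω) ∂P) < ∞ := by
    intro X Y hX hY hfX hfY
    calc ∫⁻ ω, levyCndf ρ (X ω - Y ω) ∂P
        ≤ ∫⁻ ω, (2 * levyCndf ρ (X ω) + 2 * levyCndf ρ (Y ω)) ∂P :=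
          lintegral_mono fun ω => levyCndf_sub_le ρ _ _
      _ = 2 * (∫⁻ ω, levyCndf ρ (X ω) ∂P) + 2 * (∫⁻ ω, levyCndf ρ (Y ω) ∂P) := by
          rw [lintegral_add_left (show Measurable fun ω => 2 * levyCndf ρ (X ω) from
              (mΘ.comp hX).const_mul 2),
            lintegral_const_mul 2 (show Measurable fun ω => levyCndf ρ (X ω) from mΘ.comp hX),
            lintegral_const_mul 2 (show Measurable fun ω => levyCndf ρ (Y ω) from mΘ.comp hY)]
      _ < ∞ := ENNReal.add_lt_top.mpr ⟨ENNReal.mul_lt_top ENNReal.ofNat_lt_top hfX,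
          ENNReal.mul_lt_top ENNReal.ofNat_lt_top hfY⟩
  have fin1 : ∫⁻ ω, levyCndf ρ (U ω - V' ω) ∂P < ∞ :=
    hfin U V' hU hV' hIU (by rw [hidV]; exact hIV)
  have fin2 : ∫⁻ ω, levyCndf ρ (U ω - U' ω) ∂P < ∞ :=
    hfin U U' hU hU' hIU (by rw [hidU]; exact hIU)
  have fin3 : ∫⁻ ω, levyCndf ρ (V ω - V' ω) ∂P < ∞ :=
    hfin V V' hV hV' hIV (by rw [hidV]; exact hIV)
  -- main pointwise identity for the characteristic function distance
  have E0 : ∫⁻ r, (‖charFn P U r - charFn P V r‖₊ : ℝ≥0∞) ^ 2 ∂ρ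
      = ∫⁻ r, ENNReal.ofReal (((∫ x, Real.cos ⟪x.1, r⟫ ∂μ2) - (∫ x, Real.cos ⟪x.2, r⟫ ∂μ2)) ^ 2
          + ((∫ x, Real.sin ⟪x.1, r⟫ ∂μ2) - (∫ x, Real.sin ⟪x.2, r⟫ ∂μ2)) ^ 2) ∂ρ :=
    lintegral_congr fun r => by
      rw [← enorm_eq_nnnorm, ← ofReal_norm, ← ENNReal.ofReal_pow (norm_nonneg _)]
      congr 1
      rw [Complex.sq_norm, Complex.normSq_apply, Complex.sub_re,
        Complex.sub_im, hre1 r, hre2 r, him1 r, him2 r]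
      ring
  have comb := final_combine ρ
    (fun r => ∫ x, Real.cos ⟪x.1, r⟫ ∂μ2) (fun r => ∫ x, Real.sin ⟪x.1, r⟫ ∂μ2)
    (fun r => ∫ x, Real.cos ⟪x.2, r⟫ ∂μ2) (fun r => ∫ x, Real.sin ⟪x.2, r⟫ ∂μ2)
    ma mb mc ms hA hB (by rw [← e2]; exact fin2) (by rw [← e3]; exact fin3)
    (by rw [← e1]; exact fin1)
  refine ⟨?_, fin1, fin2, fin3, ?_⟩
  · rw [E0]; exact comb.1
  · rw [E0, e1, e2, e3]; exact comb.2
end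

section
/- Let μ and ν be finite symmetric Lévy measures on ℝ^m∖{0} and ℝ^n∖{0} with associated continuous negative definite functions Φ(x) = ∫(1 − cos⟨x,s⟩) μ(ds) and Ψ(y) = ∫(1 − cos⟨y,t⟩) ν(dt), and let Θ(x,y) = ∬(1 − cos(⟨x,s⟩ + ⟨y,t⟩)) μ(ds) ν(dt) be the continuous negative definite function associated with the product measure μ ⊗ ν on ℝ^{m+n}. Then for all x ∈ ℝ^m and y ∈ ℝ^n: Θ(x,y) = Ψ(y) μ(ℝ^m) + Φ(x) ν(ℝ^n) − Φ(x) Ψ(y). -/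
open MeasureTheory
open scoped ENNReal RealInnerProductSpace

lemma integrable_aux {d : ℕ} (ρ : Measure (EuclideanSpace ℝ (Fin d)))
    [IsFiniteMeasure ρ] (f : ℝ → ℝ) (hf : Continuous f) (hb : ∀ a : ℝ, |f a| ≤ 1)
    (z : EuclideanSpace ℝ (Fin d)) :
    Integrable (fun t => f ⟪z, t⟫) ρ := by
  refine (integrable_const (1:ℝ)).mono' ?_ ?_
  · exact (hf.comp (continuous_const.inner continuous_id)).aestronglyMeasurable
  · filter_upwards with t using by simpa using hb _

lemma sin_integral_zero {d : ℕ} (ρ : Measure (EuclideanSpace ℝ (Fin d)))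
    [IsFiniteMeasure ρ] (hsym : IsSymmetricMeasure ρ) (z : EuclideanSpace ℝ (Fin d)) :
    ∫ t, Real.sin ⟪z, t⟫ ∂ρ = 0 := by
  have h1 : ∫ t, Real.sin ⟪z, t⟫ ∂ρ = ∫ t, Real.sin ⟪z, t⟫ ∂(ρ.map (fun r => -r)) := by
    rw [hsym]
  have hc : Continuous fun t : EuclideanSpace ℝ (Fin d) => Real.sin ⟪z, t⟫ :=
    Real.continuous_sin.comp (continuous_const.inner continuous_id)
  rw [integral_map measurable_neg.aemeasurable hc.aestronglyMeasurable] at h1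
  simp only [inner_neg_neg, inner_neg_right, Real.sin_neg, integral_neg] at h1
  linarith

/-- Let `μ, ν` be finite symmetric Lévy measures on `ℝ^m ∖ {0}` and `ℝ^n ∖ {0}` with
associated cndfs `Φ(x) = ∫ (1 - cos ⟪x,s⟫) μ(ds)`, `Ψ(y) = ∫ (1 - cos ⟪y,t⟫) ν(dt)`, and
let `Θ(x,y) = ∬ (1 - cos (⟪x,s⟫ + ⟪y,t⟫)) μ(ds) ν(dt)` be the cndf of the product measure
`μ ⊗ ν`. Then `Θ(x,y) = Ψ(y) μ(ℝ^m) + Φ(x) ν(ℝ^n) - Φ(x) Ψ(y)`. -/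
theorem prod_cndf_eq {m n : ℕ}
    (μ : Measure (EuclideanSpace ℝ (Fin m))) (ν : Measure (EuclideanSpace ℝ (Fin n)))
    [IsFiniteMeasure μ] [IsFiniteMeasure ν]
    (hμ0 : μ {0} = 0) (hν0 : ν {0} = 0)
    (hμsym : IsSymmetricMeasure μ) (hνsym : IsSymmetricMeasure ν)
    (x : EuclideanSpace ℝ (Fin m)) (y : EuclideanSpace ℝ (Fin n)) :
    (∫ s, ∫ t, (1 - Real.cos (⟪x, s⟫ + ⟪y, t⟫)) ∂ν ∂μ)
      = (∫ t, (1 - Real.cos ⟪y, t⟫) ∂ν) * (μ Set.univ).toReal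
        + (∫ s, (1 - Real.cos ⟪x, s⟫) ∂μ) * (ν Set.univ).toReal
        - (∫ s, (1 - Real.cos ⟪x, s⟫) ∂μ) * ∫ t, (1 - Real.cos ⟪y, t⟫) ∂ν := by
  set M : ℝ := (μ Set.univ).toReal
  set N : ℝ := (ν Set.univ).toReal
  have hcosν : Integrable (fun t => Real.cos ⟪y, t⟫) ν :=
    integrable_aux ν Real.cos Real.continuous_cos (fun a => Real.abs_cos_le_one a) y
  have hsinν : Integrable (fun t => Real.sin ⟪y, t⟫) ν :=
    integrable_aux ν Real.sin Real.continuous_sin (fun a => Real.abs_sin_le_one a) y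
  have hcosμ : Integrable (fun s => Real.cos ⟪x, s⟫) μ :=
    integrable_aux μ Real.cos Real.continuous_cos (fun a => Real.abs_cos_le_one a) x
  set Cν : ℝ := ∫ t, Real.cos ⟪y, t⟫ ∂ν
  set Cμ : ℝ := ∫ s, Real.cos ⟪x, s⟫ ∂μ
  have hΨ : (∫ t, (1 - Real.cos ⟪y, t⟫) ∂ν) = N - Cν := by
    rw [integral_sub (integrable_const 1) hcosν]
    simp [N, Cν, Measure.real]
  have hΦ : (∫ s, (1 - Real.cos ⟪x, s⟫) ∂μ) = M - Cμ := by
    rw [integral_sub (integrable_const 1) hcosμ]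
    simp [M, Cμ, Measure.real]
  have hinner : ∀ s : EuclideanSpace ℝ (Fin m),
      (∫ t, (1 - Real.cos (⟪x, s⟫ + ⟪y, t⟫)) ∂ν) = N - Real.cos ⟪x, s⟫ * Cν := by
    intro s
    have : ∀ t : EuclideanSpace ℝ (Fin n),
        (1 : ℝ) - Real.cos (⟪x, s⟫ + ⟪y, t⟫)
          = 1 - (Real.cos ⟪x, s⟫ * Real.cos ⟪y, t⟫ - Real.sin ⟪x, s⟫ * Real.sin ⟪y, t⟫) := by
      intro t; rw [Real.cos_add]
    simp only [this]
    have e2 : ∀ t : EuclideanSpace ℝ (Fin n),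
        (1:ℝ) - (Real.cos ⟪x, s⟫ * Real.cos ⟪y, t⟫ - Real.sin ⟪x, s⟫ * Real.sin ⟪y, t⟫)
          = (1 - Real.cos ⟪x, s⟫ * Real.cos ⟪y, t⟫) + Real.sin ⟪x, s⟫ * Real.sin ⟪y, t⟫ := by
      intro t; ring
    simp only [e2]
    rw [integral_add (f := fun t => 1 - Real.cos ⟪x, s⟫ * Real.cos ⟪y, t⟫)
      (g := fun t => Real.sin ⟪x, s⟫ * Real.sin ⟪y, t⟫)
      ((integrable_const 1).sub (hcosν.const_mul _)) (hsinν.const_mul _),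
      integral_sub (integrable_const 1) (hcosν.const_mul _), integral_const_mul,
      integral_const_mul, sin_integral_zero ν hνsym y]
    simp only [integral_const, smul_eq_mul, mul_one, mul_zero, add_zero, Measure.real]
    rfl
  rw [integral_congr_ae (Filter.Eventually.of_forall hinner)]
  rw [integral_sub (integrable_const N) (hcosμ.mul_const Cν)]
  simp_rw [mul_comm _ Cν]
  rw [integral_const_mul]
  simp only [integral_const, smul_eq_mul, hΨ, hΦ, Measure.real]
  have : (μ Set.univ).toReal = M := rfl
  rw [this]
  ring
end
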